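/- arXiv:math/0309405 — 8 statements merged into one kernel-verified Lean document; each statement's English description precedes it below -/
import Mathlib

section
/- Let E be a Banach space with a normalized Schauder basis (e_n), and let D ⊆ E be a weakly compact subset. Then for every δ > 0 and every n ∈ ℕ there exists m > n such that for every x = ∑_j a_j e_j ∈ D there is an index j ∈ [n, m) with |a_j| < δ. -/
open Filter Topology

/-- A set is weakly compact if it is compact in the weak topology. -/
def IsWeaklyCompact {E : Type*} [NormedAddCommGroup E] [NormedSpace ℝ E] (D : Set E) : Prop :=
  IsCompact (toWeakSpace ℝ E '' D)

/-- If `E` is a Banach space with a normalized Schauder basis `(e_n)` (with coordinate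
functionals `a_n`) and `D ⊆ E` is weakly compact, then for every `δ > 0` and `n` there is
`m > n` so that every `x ∈ D` has some coordinate `j ∈ [n, m)` with `|a_j(x)| < δ`. -/
theorem stmt_0 {E : Type*} [NormedAddCommGroup E] [NormedSpace ℝ E] [CompleteSpace E]
    (e : ℕ → E) (a : ℕ → E →L[ℝ] ℝ)
    (hnorm : ∀ j, ‖e j‖ = 1)
    (hbio : ∀ i j, a i (e j) = if i = j then 1 else 0)
    (hexp : ∀ x : E, Tendsto (fun n => ∑ j ∈ Finset.range n, a j x • e j) atTop (nhds x))
    (D : Set E) (hD : IsWeaklyCompact D) :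
    ∀ δ : ℝ, 0 < δ → ∀ n : ℕ, ∃ m : ℕ, n < m ∧
      ∀ x ∈ D, ∃ j : ℕ, n ≤ j ∧ j < m ∧ |a j x| < δ := by
  intro δ hδ n
  by_contra h
  push_neg at h
  -- h : ∀ m, n < m → ∃ x ∈ D, ∀ j, n ≤ j → j < m → δ ≤ |a j x|
  set Z : ℕ → Set (WeakSpace ℝ E) := fun j =>
    if n ≤ j then {y | δ ≤ |a j ((toWeakSpace ℝ E).symm y)|} else Set.univ with hZ
  have hZc : ∀ j, IsClosed (Z j) := by
    intro j
    rw [hZ]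
    by_cases hj : n ≤ j
    · simp only [hj, if_true]
      exact isClosed_le continuous_const
        ((WeakBilin.eval_continuous _ (a j)).abs)
    · simp [hj]
  have hne : ∀ t : Finset ℕ, ((toWeakSpace ℝ E '' D) ∩ ⋂ j ∈ t, Z j).Nonempty := by
    intro t
    obtain ⟨x, hxD, hx⟩ := h (t.sup id + n + 1) (by omega)
    refine ⟨toWeakSpace ℝ E x, Set.mem_image_of_mem _ hxD, ?_⟩
    simp only [Set.mem_iInter]
    intro j hj
    rw [hZ]
    by_cases hnj : n ≤ j
    · simp only [hnj, if_true, Set.mem_setOf_eq, LinearEquiv.symm_apply_apply]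
      exact hx j hnj (by have := Finset.le_sup (f := id) hj; simp at this; omega)
    · simp [hnj]
  obtain ⟨y, hyK, hy⟩ := hD.inter_iInter_nonempty Z hZc hne
  obtain ⟨x, hxD, hxy⟩ := hyK
  have hx : ∀ j, n ≤ j → δ ≤ |a j x| := by
    intro j hj
    have := Set.mem_iInter.1 hy j
    rw [hZ] at this
    simp only [hj, if_true, Set.mem_setOf_eq, ← hxy, LinearEquiv.symm_apply_apply] at this
    exact this
  -- coordinates tend to zero
  have h0 : Tendsto (fun j => |a j x|) atTop (nhds 0) := by
    have h1 : Tendsto (fun k => (∑ j ∈ Finset.range (k+1), a j x • e j)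
        - ∑ j ∈ Finset.range k, a j x • e j) atTop (nhds (x - x)) :=
      (((hexp x).comp (tendsto_add_atTop_nat 1))).sub (hexp x)
    simp only [sub_self, Finset.sum_range_succ, add_sub_cancel_left] at h1
    have h2 : Tendsto (fun k => ‖a k x • e k‖) atTop (nhds 0) := by
      simpa using h1.norm
    simpa [norm_smul, hnorm] using h2
  have := (h0.eventually (eventually_lt_nhds hδ)).and (eventually_ge_atTop n)
  obtain ⟨j, hj1, hj2⟩ := this.exists
  exact absurd (hx j hj2) (not_le.2 hj1)
end

section
/- If a Banach space E has the bounded weakly compact approximation property, then the Banach algebra W(E) of weakly compact operators on E has a bounded left approximate identity. -/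
open Filter Topology

/-- An operator is weakly compact if the image of the closed unit ball is relatively
compact in the weak topology. -/
def IsWeaklyCompactOp {E F : Type*} [NormedAddCommGroup E] [NormedSpace ℝ E]
    [NormedAddCommGroup F] [NormedSpace ℝ F] (V : E →L[ℝ] F) : Prop :=
  IsCompact (closure (toWeakSpace ℝ F '' (V '' Metric.closedBall 0 1)))

/-- `E` has the W.A.P. with constant `C`. -/
def HasWAPWith (E : Type*) [NormedAddCommGroup E] [NormedSpace ℝ E] (C : ℝ) : Prop :=
  ∀ D : Set E, IsWeaklyCompact D → ∀ ε : ℝ, 0 < ε →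
    ∃ V : E →L[ℝ] E, IsWeaklyCompactOp V ∧ ‖V‖ ≤ C ∧ ∀ x ∈ D, ‖x - V x‖ < ε

/-- If a Banach space `E` has the bounded weakly compact approximation property, then the
algebra `W(E)` of weakly compact operators on `E` has a bounded left approximate identity:
there is a bound `C` such that for any finitely many weakly compact operators `y` and any
`ε > 0` there is a weakly compact `x` with `‖x‖ ≤ C` and `‖y - x ∘ y‖ < ε` for all `y`. -/
theorem stmt_1 {E : Type*} [NormedAddCommGroup E] [NormedSpace ℝ E] [CompleteSpace E]
    (hWAP : ∃ C : ℝ, HasWAPWith E C) :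
    ∃ C : ℝ, ∀ Y : Finset (E →L[ℝ] E), (∀ y ∈ Y, IsWeaklyCompactOp y) →
      ∀ ε : ℝ, 0 < ε → ∃ x : E →L[ℝ] E, IsWeaklyCompactOp x ∧ ‖x‖ ≤ C ∧
        ∀ y ∈ Y, ‖y - x.comp y‖ < ε := by
  obtain ⟨C, hC⟩ := hWAP
  refine ⟨C, ?_⟩
  intro Y hY ε hε
  set K : Set (WeakSpace ℝ E) :=
    ⋃ y ∈ Y, closure (toWeakSpace ℝ E '' (y '' Metric.closedBall 0 1)) with hKdef
  have hK : IsCompact K :=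
    Y.finite_toSet.isCompact_biUnion (fun y hy => hY y hy)
  set D : Set E := (toWeakSpace ℝ E) ⁻¹' K with hDdef
  have hD : IsWeaklyCompact D := by
    unfold IsWeaklyCompact
    rw [hDdef, Set.image_preimage_eq K (toWeakSpace ℝ E).surjective]
    exact hK
  obtain ⟨V, hVw, hVn, hVapprox⟩ := hC D hD (ε / 2) (by positivity)
  refine ⟨V, hVw, hVn, ?_⟩
  intro y hy
  have key : ∀ z ∈ Metric.closedBall (0 : E) 1, ‖(y - V.comp y) z‖ ≤ ε / 2 := by
    intro z hz
    have hmem : y z ∈ D := by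
      show toWeakSpace ℝ E (y z) ∈ K
      exact Set.mem_biUnion hy (subset_closure ⟨y z, ⟨z, hz, rfl⟩, rfl⟩)
    have := (hVapprox (y z) hmem).le
    simpa [ContinuousLinearMap.sub_apply, ContinuousLinearMap.comp_apply] using this
  have hbound : ‖y - V.comp y‖ ≤ ε / 2 := by
    apply ContinuousLinearMap.opNorm_le_bound' _ (by positivity)
    intro x hx
    have hxn : (0 : ℝ) < ‖x‖ := lt_of_le_of_ne (norm_nonneg x) (Ne.symm hx)
    set u : E := ‖x‖⁻¹ • x with hu
    have hun : ‖u‖ = 1 := by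
      rw [hu, norm_smul, norm_inv, norm_norm, inv_mul_cancel₀ hxn.ne']
    have humem : u ∈ Metric.closedBall (0 : E) 1 := by
      simp [Metric.mem_closedBall, hun]
    have hfu := key u humem
    have hfx : (y - V.comp y) u = ‖x‖⁻¹ • (y - V.comp y) x := by
      rw [hu, map_smul]
    rw [hfx, norm_smul, norm_inv, norm_norm] at hfu
    calc ‖(y - V.comp y) x‖ = ‖x‖ * (‖x‖⁻¹ * ‖(y - V.comp y) x‖) := by
          field_simp
      _ ≤ ‖x‖ * (ε / 2) := by
          exact mul_le_mul_of_nonneg_left hfu hxn.le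
      _ = ε / 2 * ‖x‖ := by ring
  linarith [hbound]
end

section
/- If a Banach space E has the W.A.P. with constant C and M ⊆ E is a closed subspace that is the range of a bounded projection P on E, then M has the W.A.P. with constant ‖P‖·C. -/
open Filter Topology

instance weakSpaceT2 (F : Type*) [NormedAddCommGroup F] [NormedSpace ℝ F] :
    T2Space (WeakSpace ℝ F) := by
  refine T2Space.of_injective_continuous
    (f := fun (x : WeakSpace ℝ F) (l : F →L[ℝ] ℝ) => (topDualPairing ℝ F).flip x l) ?_ ?_
  · intro x y h
    by_contra hne
    have hne' : (toWeakSpace ℝ F).symm x ≠ (toWeakSpace ℝ F).symm y :=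
      fun hc => hne ((toWeakSpace ℝ F).symm.injective hc)
    obtain ⟨l, hl⟩ := SeparatingDual.exists_separating_of_ne (R := ℝ) hne'
    exact hl (congrFun h l)
  · exact continuous_pi fun l => WeakBilin.eval_continuous _ l

lemma isWeaklyCompact_image {E F : Type*} [NormedAddCommGroup E] [NormedSpace ℝ E]
    [NormedAddCommGroup F] [NormedSpace ℝ F] (f : E →L[ℝ] F) {D : Set E}
    (hD : IsWeaklyCompact D) : IsWeaklyCompact (f '' D) := by
  have h : toWeakSpace ℝ F '' (f '' D) = WeakSpace.map f '' (toWeakSpace ℝ E '' D) := by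
    rw [← Set.image_comp, ← Set.image_comp]; rfl
  rw [IsWeaklyCompact, h]
  exact hD.image (WeakSpace.map f).continuous


/-- If `E` has the W.A.P. with constant `C` and `M` is the range of a bounded projection
`P` on `E`, then `M` has the W.A.P. with constant `‖P‖ * C`. -/
theorem stmt_3 {E : Type*} [NormedAddCommGroup E] [NormedSpace ℝ E] [CompleteSpace E]
    (C : ℝ) (hE : HasWAPWith E C)
    (P : E →L[ℝ] E) (hidem : P.comp P = P)
    (M : Submodule ℝ E) (hMclosed : IsClosed (M : Set E))
    (hrange : LinearMap.range (P : E →ₗ[ℝ] E) = M) :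
    HasWAPWith ↥M (‖P‖ * C) := by
  -- C is nonnegative
  have hC : 0 ≤ C := by
    obtain ⟨V₀, -, hV₀, -⟩ := hE ∅ (by simp [IsWeaklyCompact, isCompact_empty]) 1 one_pos
    exact le_trans (norm_nonneg V₀) hV₀
  have hPnn : (0:ℝ) ≤ ‖P‖ := norm_nonneg P
  have hPmem : ∀ x : E, P x ∈ M := fun x => hrange ▸ LinearMap.mem_range_self _ x
  have hPfix : ∀ x ∈ M, P x = x := by
    intro x hx
    obtain ⟨y, rfl⟩ := hrange.symm ▸ hx
    have := congrArg (fun f : E →L[ℝ] E => f y) hidem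
    simpa using this
  set ι : ↥M →L[ℝ] E := M.subtypeL with hι
  set Q : E →L[ℝ] ↥M := P.codRestrict M hPmem with hQ
  intro D hD ε hε
  have hD' : IsWeaklyCompact (ι '' D) := isWeaklyCompact_image ι hD
  have hε' : 0 < ε / (‖P‖ + 1) := by positivity
  obtain ⟨V, hVc, hVn, hVapp⟩ := hE (ι '' D) hD' (ε / (‖P‖ + 1)) hε'
  set W : ↥M →L[ℝ] ↥M := (Q.comp V).comp ι with hW
  refine ⟨W, ?_, ?_, ?_⟩
  · -- weakly compact
    set K := closure (toWeakSpace ℝ E '' (V '' Metric.closedBall 0 1)) with hK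
    have hKc : IsCompact (WeakSpace.map Q '' K) := hVc.image (WeakSpace.map Q).continuous
    refine hKc.of_isClosed_subset isClosed_closure ?_
    refine closure_minimal ?_ hKc.isClosed
    rintro y ⟨z, ⟨x, hx, rfl⟩, rfl⟩
    refine ⟨toWeakSpace ℝ E (V (ι x)), subset_closure ⟨V (ι x), ⟨ι x, ?_, rfl⟩, rfl⟩, rfl⟩
    rw [Metric.mem_closedBall] at hx ⊢
    simpa [hι] using hx
  · -- norm bound
    refine ContinuousLinearMap.opNorm_le_bound _ (by positivity) fun x => ?_
    have h1 : ‖W x‖ = ‖P (V (ι x))‖ := rfl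
    have h2 : ‖P (V (ι x))‖ ≤ ‖P‖ * ‖V (ι x)‖ := P.le_opNorm _
    have h3 : ‖V (ι x)‖ ≤ ‖V‖ * ‖(ι x)‖ := V.le_opNorm _
    have h4 : ‖(ι x)‖ = ‖x‖ := rfl
    have h5 : ‖V‖ * ‖x‖ ≤ C * ‖x‖ := mul_le_mul_of_nonneg_right hVn (norm_nonneg x)
    calc ‖W x‖ = ‖P (V (ι x))‖ := h1
      _ ≤ ‖P‖ * ‖V (ι x)‖ := h2
      _ ≤ ‖P‖ * (C * ‖x‖) := by
          refine mul_le_mul_of_nonneg_left ?_ hPnn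
          rw [← h4] at h5 ⊢
          exact le_trans h3 h5
      _ = ‖P‖ * C * ‖x‖ := by ring
  · -- approximation
    intro x hx
    have hmem : (ι x : E) ∈ ι '' D := ⟨x, hx, rfl⟩
    have happ := hVapp _ hmem
    have hcoe : ((x - W x : ↥M) : E) = P ((ι x : E) - V (ι x)) := by
      have h0 : ((W x : ↥M) : E) = P (V (ι x)) := rfl
      push_cast [h0]
      rw [map_sub, hPfix (ι x) x.2]; rfl
    have h1 : ‖x - W x‖ = ‖P ((ι x : E) - V (ι x))‖ := by
      rw [← hcoe]; rfl
    have h2 : ‖P ((ι x : E) - V (ι x))‖ ≤ ‖P‖ * ‖(ι x : E) - V (ι x)‖ := P.le_opNorm _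
    have h3 : ‖P‖ * ‖(ι x : E) - V (ι x)‖ ≤ ‖P‖ * (ε / (‖P‖ + 1)) :=
      mul_le_mul_of_nonneg_left happ.le hPnn
    have h4 : ‖P‖ * (ε / (‖P‖ + 1)) < ε := by
      have hp1 : (0:ℝ) < ‖P‖ + 1 := by linarith
      have hlt : ‖P‖ / (‖P‖ + 1) < 1 := (div_lt_one hp1).mpr (by linarith)
      calc ‖P‖ * (ε / (‖P‖ + 1)) = (‖P‖ / (‖P‖ + 1)) * ε := by ring
        _ < 1 * ε := mul_lt_mul_of_pos_right hlt hε
        _ = ε := one_mul ε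
    rw [h1]
    exact lt_of_le_of_lt (le_trans h2 h3) h4
end

section
/- Let (E_j) be a sequence of Banach spaces and let X = ℓ¹(E_j) be their ℓ¹-direct sum. If D ⊆ X is weakly compact, then for every δ > 0 there exists n ∈ ℕ such that sup_{y=(y_j) ∈ D} ∑_{j≥n} ‖y_j‖ ≤ δ. -/
open Filter Topology

instance : Fact ((1 : ENNReal) ≤ 1) := ⟨le_rfl⟩

section Aux
set_option linter.unusedSectionVars false
variable {E : ℕ → Type*} [∀ j, NormedAddCommGroup (E j)] [∀ j, NormedSpace ℝ (E j)]

/-- tail sum -/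
noncomputable def tl (y : lp E 1) (n : ℕ) : ℝ := ∑' j, ‖(y : ∀ j, E j) (n + j)‖

lemma summable_norm_lp (y : lp E 1) : Summable (fun j => ‖(y : ∀ j, E j) j‖) := by
  have h := lp.memℓp y
  have h2 := h.summable (p := 1) (by norm_num)
  simpa using h2

lemma summable_norm_lp_add (y : lp E 1) (n : ℕ) :
    Summable (fun j => ‖(y : ∀ j, E j) (n + j)‖) := by
  have : (fun j => ‖(y : ∀ j, E j) (n + j)‖) = fun j => ‖(y : ∀ j, E j) (j + n)‖ := by
    funext j; rw [add_comm]
  rw [this]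
  exact (summable_nat_add_iff n).2 (summable_norm_lp y)

lemma tl_nonneg (y : lp E 1) (n : ℕ) : 0 ≤ tl y n :=
  tsum_nonneg fun _ => norm_nonneg _

lemma tl_split (y : lp E 1) {n m : ℕ} (h : n ≤ m) :
    tl y n = (∑ i ∈ Finset.Ico n m, ‖(y : ∀ j, E j) i‖) + tl y m := by
  have hs := summable_norm_lp_add y n
  have key := Summable.sum_add_tsum_nat_add (f := fun j => ‖(y : ∀ j, E j) (n + j)‖) (m - n) hs
  rw [tl, ← key]
  congr 1
  · rw [Finset.sum_Ico_eq_sum_range]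
  · rw [tl]
    apply tsum_congr
    intro i
    show ‖(y : ∀ j, E j) (n + (i + (m - n)))‖ = _
    have : n + (i + (m - n)) = m + i := by omega
    rw [this]

lemma tl_anti (y : lp E 1) {n m : ℕ} (h : n ≤ m) : tl y m ≤ tl y n := by
  rw [tl_split y h]
  have : 0 ≤ ∑ i ∈ Finset.Ico n m, ‖(y : ∀ j, E j) i‖ :=
    Finset.sum_nonneg fun _ _ => norm_nonneg _
  linarith

lemma tendsto_tl (y : lp E 1) : Tendsto (tl y) atTop (𝓝 0) := by
  have h := tendsto_sum_nat_add (fun j => ‖(y : ∀ j, E j) j‖)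
  convert h using 2 with n
  rw [tl]
  exact tsum_congr fun j => by rw [add_comm]

lemma exists_tl_lt (y : lp E 1) {c : ℝ} (hc : 0 < c) (N : ℕ) :
    ∃ n, N ≤ n ∧ tl y n < c := by
  have h1 : ∀ᶠ n in atTop, tl y n < c := (tendsto_tl y).eventually_lt_const hc
  exact ((eventually_ge_atTop N).and h1).exists

end Aux

section Phi
variable {E : ℕ → Type*} [∀ j, NormedAddCommGroup (E j)] [∀ j, NormedSpace ℝ (E j)]

lemma norm_lp_one (y : lp E 1) : ‖y‖ = ∑' j, ‖(y : ∀ j, E j) j‖ := by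
  have h := lp.norm_eq_tsum_rpow (p := 1) (by norm_num) y
  simpa using h

lemma summable_apply (G : ∀ j, E j →L[ℝ] ℝ) (hG : ∀ j, ‖G j‖ ≤ 1) (y : lp E 1) :
    Summable (fun j => G j ((y : ∀ j, E j) j)) := by
  apply Summable.of_norm_bounded (summable_norm_lp y)
  intro j
  calc ‖G j ((y : ∀ j, E j) j)‖ ≤ ‖G j‖ * ‖(y : ∀ j, E j) j‖ := (G j).le_opNorm _
    _ ≤ 1 * ‖(y : ∀ j, E j) j‖ := by
        apply mul_le_mul_of_nonneg_right (hG j) (norm_nonneg _)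
    _ = ‖(y : ∀ j, E j) j‖ := one_mul _

noncomputable def Phi (G : ∀ j, E j →L[ℝ] ℝ) (hG : ∀ j, ‖G j‖ ≤ 1) : lp E 1 →L[ℝ] ℝ :=
  LinearMap.mkContinuous
    { toFun := fun y => ∑' j, G j ((y : ∀ j, E j) j)
      map_add' := fun y z => by
        have h1 := summable_apply G hG y
        have h2 := summable_apply G hG z
        rw [← Summable.tsum_add h1 h2]
        exact tsum_congr fun j => by
          rw [← map_add]
          congr 1
      map_smul' := fun c y => by
        simp only [RingHom.id_apply]
        rw [← tsum_const_smul'' c]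
        exact tsum_congr fun j => by
          rw [← map_smul]
          congr 1 }
    1 (fun y => by
      simp only [LinearMap.coe_mk, AddHom.coe_mk, one_mul]
      calc ‖∑' j, G j ((y : ∀ j, E j) j)‖ ≤ ∑' j, ‖(y : ∀ j, E j) j‖ := by
            apply tsum_of_norm_bounded (summable_norm_lp y).hasSum
            intro j
            calc ‖G j ((y : ∀ j, E j) j)‖ ≤ ‖G j‖ * ‖(y : ∀ j, E j) j‖ := (G j).le_opNorm _
              _ ≤ 1 * ‖(y : ∀ j, E j) j‖ :=
                  mul_le_mul_of_nonneg_right (hG j) (norm_nonneg _)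
              _ = ‖(y : ∀ j, E j) j‖ := one_mul _
        _ = ‖y‖ := (norm_lp_one y).symm)

lemma Phi_apply (G : ∀ j, E j →L[ℝ] ℝ) (hG : ∀ j, ‖G j‖ ≤ 1) (y : lp E 1) :
    Phi G hG y = ∑' j, G j ((y : ∀ j, E j) j) := rfl

/-- If the coefficients vanish below `n`, `|Phi G y| ≤ tl y n`. -/
lemma abs_Phi_le (G : ∀ j, E j →L[ℝ] ℝ) (hG : ∀ j, ‖G j‖ ≤ 1) (y : lp E 1) (n : ℕ)
    (h0 : ∀ j < n, G j = 0) : |Phi G hG y| ≤ tl y n := by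
  rw [Phi_apply]
  have hsum := summable_apply G hG y
  have key := Summable.sum_add_tsum_nat_add (f := fun j => G j ((y : ∀ j, E j) j)) n hsum
  have hhead : ∑ i ∈ Finset.range n, G i ((y : ∀ j, E j) i) = 0 := by
    apply Finset.sum_eq_zero
    intro i hi
    rw [h0 i (Finset.mem_range.1 hi)]
    rfl
  rw [← key, hhead, zero_add]
  rw [← Real.norm_eq_abs]
  apply tsum_of_norm_bounded (summable_norm_lp_add y n).hasSum
  intro j
  calc ‖G (j + n) ((y : ∀ j, E j) (j + n))‖ ≤ 1 * ‖(y : ∀ j, E j) (j + n)‖ :=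
        le_trans ((G _).le_opNorm _) (mul_le_mul_of_nonneg_right (hG _) (norm_nonneg _))
    _ = ‖(y : ∀ j, E j) (n + j)‖ := by rw [one_mul, add_comm]

/-- Split `Phi` at `N`. -/
lemma Phi_split (G : ∀ j, E j →L[ℝ] ℝ) (hG : ∀ j, ‖G j‖ ≤ 1) (y : lp E 1) (N : ℕ) :
    Phi G hG y = (∑ j ∈ Finset.range N, G j ((y : ∀ j, E j) j))
      + ∑' j, G (N + j) ((y : ∀ j, E j) (N + j)) := by
  rw [Phi_apply]
  have hsum := summable_apply G hG y
  have key := Summable.sum_add_tsum_nat_add (f := fun j => G j ((y : ∀ j, E j) j)) N hsum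
  rw [← key]
  congr 1
  exact tsum_congr fun j => by rw [add_comm j N]

lemma abs_tsum_tail_le (G : ∀ j, E j →L[ℝ] ℝ) (hG : ∀ j, ‖G j‖ ≤ 1) (y : lp E 1) (N : ℕ) :
    |∑' j, G (N + j) ((y : ∀ j, E j) (N + j))| ≤ tl y N := by
  rw [← Real.norm_eq_abs]
  apply tsum_of_norm_bounded (summable_norm_lp_add y N).hasSum
  intro j
  calc ‖G (N + j) ((y : ∀ j, E j) (N + j))‖ ≤ 1 * ‖(y : ∀ j, E j) (N + j)‖ :=
        le_trans ((G _).le_opNorm _) (mul_le_mul_of_nonneg_right (hG _) (norm_nonneg _))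
    _ = ‖(y : ∀ j, E j) (N + j)‖ := one_mul _

end Phi

section Cluster
variable {X : Type*} [NormedAddCommGroup X] [NormedSpace ℝ X]

lemma weak_eval_continuous (f : X →L[ℝ] ℝ) :
    Continuous fun x : WeakSpace ℝ X => (topDualPairing ℝ X).flip x f :=
  WeakBilin.eval_continuous _ f

lemma weak_cluster (D : Set X) (hD : IsCompact (toWeakSpace ℝ X '' D))
    (z : ℕ → X) (hz : ∀ n, z n ∈ D) :
    ∃ y ∈ D, ∀ (m : ℕ) (fs : ℕ → (X →L[ℝ] ℝ)) (ε : ℝ), 0 < ε → ∀ N : ℕ, ∃ n, N ≤ n ∧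
      ∀ l < m, |fs l (z n) - fs l y| < ε := by
  set T := toWeakSpace ℝ X with hT
  have hle : map (fun n => T (z n)) atTop ≤ 𝓟 (T '' D) := by
    rw [le_principal_iff, mem_map]
    filter_upwards with n using ⟨z n, hz n, rfl⟩
  obtain ⟨a, ha, hcl⟩ := hD.exists_clusterPt hle
  obtain ⟨y, hy, rfl⟩ := ha
  refine ⟨y, hy, fun m fs ε hε N => ?_⟩
  have hfreq : ∀ s ∈ 𝓝 (T y), ∃ᶠ n in atTop, T (z n) ∈ s := by
    have := (mapClusterPt_iff_frequently).1 (hcl : MapClusterPt (T y) atTop fun n => T (z n))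
    exact this
  set U : Set (WeakSpace ℝ X) :=
    ⋂ l : Fin m, (fun x : WeakSpace ℝ X => (topDualPairing ℝ X).flip x (fs l)) ⁻¹'
      (Metric.ball (fs l y) ε) with hU
  have hUopen : IsOpen U :=
    isOpen_iInter_of_finite fun l =>
      (Metric.isOpen_ball).preimage (weak_eval_continuous (fs l))
  have hmem : T y ∈ U := by
    rw [hU]
    refine Set.mem_iInter.2 fun l => ?_
    show (topDualPairing ℝ X).flip (T y) (fs l) ∈ Metric.ball (fs l y) ε
    have : (topDualPairing ℝ X).flip (T y) (fs l) = fs l y := rfl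
    rw [this]
    exact Metric.mem_ball_self hε
  have h2 := hfreq U (hUopen.mem_nhds hmem)
  obtain ⟨n, hn1, hn2⟩ := (h2.and_eventually (eventually_ge_atTop N)).exists
  refine ⟨n, hn2, fun l hl => ?_⟩
  have := Set.mem_iInter.1 hn1 ⟨l, hl⟩
  have h3 : (topDualPairing ℝ X).flip (T (z n)) (fs l) ∈ Metric.ball (fs l y) ε := this
  have h4 : (topDualPairing ℝ X).flip (T (z n)) (fs l) = fs l (z n) := rfl
  rw [h4] at h3
  rwa [Metric.mem_ball, Real.dist_eq] at h3

end Cluster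

section Construction
variable {E : ℕ → Type*} [∀ j, NormedAddCommGroup (E j)] [∀ j, NormedSpace ℝ (E j)]

/-- choice of norming functional -/
noncomputable def gch (j : ℕ) (x : E j) : E j →L[ℝ] ℝ :=
  (exists_dual_vector'' ℝ x).choose

lemma gch_norm (j : ℕ) (x : E j) : ‖gch j x‖ ≤ 1 :=
  (exists_dual_vector'' ℝ x).choose_spec.1

lemma gch_val (j : ℕ) (x : E j) : gch j x x = ‖x‖ := by
  have := (exists_dual_vector'' ℝ x).choose_spec.2
  exact this

noncomputable def blkG (a b : ℕ) (u : lp E 1) : ∀ j, E j →L[ℝ] ℝ := fun j =>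
  if a ≤ j ∧ j < b then gch j ((u : ∀ j, E j) j) else 0

lemma blkG_norm (a b : ℕ) (u : lp E 1) : ∀ j, ‖blkG a b u j‖ ≤ 1 := by
  intro j
  rw [blkG]
  split
  · exact gch_norm _ _
  · simp

noncomputable def blkF (a b : ℕ) (u : lp E 1) : lp E 1 →L[ℝ] ℝ :=
  Phi (blkG a b u) (blkG_norm a b u)

lemma blkF_apply (a b : ℕ) (u y : lp E 1) :
    blkF a b u y = ∑ j ∈ Finset.Ico a b,
      gch j ((u : ∀ j, E j) j) ((y : ∀ j, E j) j) := by
  rw [blkF, Phi_split _ _ _ b]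
  have htail : ∑' j, blkG a b u (b + j) ((y : ∀ i, E i) (b + j)) = 0 := by
    have h0 : ∀ j : ℕ, blkG a b u (b + j) ((y : ∀ i, E i) (b + j)) = (0 : ℝ) := by
      intro j
      rw [blkG, if_neg (by omega)]
      simp
    rw [tsum_congr h0, tsum_zero]
  rw [htail, add_zero]
  have hsub : Finset.Ico a b ⊆ Finset.range b := by
    intro x hx
    simp only [Finset.mem_Ico] at hx
    exact Finset.mem_range.2 hx.2
  rw [← Finset.sum_subset hsub (fun x hx hnx => by
    rw [blkG, if_neg (by
      simp only [Finset.mem_range] at hx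
      simp only [Finset.mem_Ico] at hnx
      omega)]
    simp)]
  apply Finset.sum_congr rfl
  intro j hj
  simp only [Finset.mem_Ico] at hj
  rw [blkG, if_pos hj]


lemma sum_blocks (b : ℕ → ℕ) (hb : Monotone b) (f : ℕ → ℝ) {K k : ℕ} (h : K ≤ k) :
    ∑ l ∈ Finset.Ico K k, ∑ j ∈ Finset.Ico (b l) (b (l + 1)), f j
      = ∑ j ∈ Finset.Ico (b K) (b k), f j := by
  induction k, h using Nat.le_induction with
  | base => simp
  | succ k hKk ih =>
      rw [Finset.sum_Ico_succ_top hKk, ih,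
        Finset.sum_Ico_consecutive _ (hb hKk) (hb (Nat.le_succ k))]

lemma construction (D : Set (lp E 1)) (δ ε : ℝ) (hε : 0 < ε)
    (y₀ : lp E 1) (n₁ : ℕ) (v : ℕ → lp E 1) (hvD : ∀ n, v n ∈ D)
    (hvtl : ∀ n, δ < tl (v n) n)
    (Hy₀ : ∀ (m : ℕ) (fs : ℕ → (lp E 1 →L[ℝ] ℝ)) (ε' : ℝ), 0 < ε' → ∀ N : ℕ,
      ∃ n, N ≤ n ∧ ∀ l < m, |fs l (v n) - fs l y₀| < ε') :
    ∃ (b : ℕ → ℕ) (w : ℕ → lp E 1),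
      b 0 = n₁ ∧ (∀ k, b k < b (k + 1)) ∧ (∀ k, w k ∈ D) ∧
      (∀ k, δ < tl (w k) (b k)) ∧ (∀ k, tl (w k) (b (k + 1)) < ε) ∧
      (∀ k l, l < k →
        |blkF (b l) (b (l + 1)) (w l) (w k) - blkF (b l) (b (l + 1)) (w l) y₀|
          < ε / (k + 1)) := by
  classical
  let bf : ∀ {k : ℕ}, (Fin k → lp E 1 × ℕ) → ℕ → ℕ := fun {k} h i =>
    if i = 0 then n₁ else if hi2 : i - 1 < k then (h ⟨i - 1, hi2⟩).2 else 0
  have hstep : ∀ (k : ℕ) (h : Fin k → lp E 1 × ℕ), ∃ p : lp E 1 × ℕ,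
      p.1 ∈ D ∧ δ < tl p.1 (bf h k) ∧
      (∀ l : Fin k, |blkF (bf h l) (bf h (l + 1)) (h l).1 p.1
        - blkF (bf h l) (bf h (l + 1)) (h l).1 y₀| < ε / (k + 1)) ∧
      bf h k < p.2 ∧ tl p.1 p.2 < ε := by
    intro k h
    have hε' : 0 < ε / (k + 1) := by positivity
    obtain ⟨n, hn1, hn2⟩ := Hy₀ k (fun l => if hl : l < k then
        blkF (bf h l) (bf h (l + 1)) (h ⟨l, hl⟩).1 else 0) (ε / (k + 1)) hε' (bf h k)
    obtain ⟨B, hB1, hB2⟩ := exists_tl_lt (v n) hε (bf h k + 1)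
    refine ⟨(v n, B), hvD n, lt_of_lt_of_le (hvtl n) (tl_anti _ hn1), ?_, by omega, hB2⟩
    intro l
    have h2 := hn2 l l.2
    rwa [dif_pos l.2] at h2
  choose nxt hnxt using hstep
  let F : ∀ k : ℕ, Fin k → lp E 1 × ℕ :=
    fun k => Nat.rec Fin.elim0 (fun k ih => Fin.snoc ih (nxt k ih)) k
  have hFsucc : ∀ k, F (k + 1) = Fin.snoc (F k) (nxt k (F k)) := fun k => rfl
  let a : ℕ → lp E 1 × ℕ := fun k => F (k + 1) (Fin.last k)
  have hFa : ∀ (k : ℕ) (i : Fin k), F k i = a i.val := by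
    intro k
    induction k with
    | zero => exact fun i => i.elim0
    | succ k ih =>
        intro i
        refine Fin.lastCases ?_ ?_ i
        · rfl
        · intro j
          rw [hFsucc, Fin.snoc_castSucc]
          exact ih j
  have ha : ∀ k, a k = nxt k (fun i : Fin k => a i.val) := by
    intro k
    have h1 : F k = fun i : Fin k => a i.val := funext (hFa k)
    show F (k + 1) (Fin.last k) = _
    rw [hFsucc, Fin.snoc_last, h1]
  let b : ℕ → ℕ := fun i => if i = 0 then n₁ else (a (i - 1)).2
  let w : ℕ → lp E 1 := fun k => (a k).1
  have hbf : ∀ (k i : ℕ) (hik : i ≤ k), bf (fun t : Fin k => a t.val) i = b i := by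
    intro k i hik
    by_cases h0 : i = 0
    · simp only [bf, b, h0, if_pos]
    · have hlt : i - 1 < k := by omega
      simp only [bf, b, if_neg h0, dif_pos hlt]
  have hQ : ∀ k, (a k).1 ∈ D ∧ δ < tl (a k).1 (b k) ∧
      (∀ l : Fin k, |blkF (b l) (b (l + 1)) (a l.val).1 (a k).1
        - blkF (b l) (b (l + 1)) (a l.val).1 y₀| < ε / (k + 1)) ∧
      b k < (a k).2 ∧ tl (a k).1 (a k).2 < ε := by
    intro k
    have h2 := hnxt k (fun i : Fin k => a i.val)
    rw [← ha k] at h2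
    obtain ⟨q1, q2, q3, q4, q5⟩ := h2
    rw [hbf k k le_rfl] at q2 q4
    refine ⟨q1, q2, fun l => ?_, q4, q5⟩
    have h3 := q3 l
    rwa [hbf k l (le_of_lt l.2), hbf k (l + 1) l.2] at h3
  have hb_succ : ∀ k, b (k + 1) = (a k).2 := fun k => by
    simp only [b]
    rfl
  refine ⟨b, w, rfl, ?_, ?_, ?_, ?_, ?_⟩
  · intro k
    rw [hb_succ k]
    exact (hQ k).2.2.2.1
  · exact fun k => (hQ k).1
  · exact fun k => (hQ k).2.1
  · intro k
    rw [hb_succ k]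
    exact (hQ k).2.2.2.2
  · intro k l hl
    exact (hQ k).2.2.1 ⟨l, hl⟩

end Construction

/-- If `D` is a weakly compact subset of the `ℓ¹`-direct sum `ℓ¹(E_j)`, then for every
`δ > 0` there is `n` such that the tails satisfy `∑_{j ≥ n} ‖y_j‖ ≤ δ` uniformly on `D`. -/
theorem stmt_4 {E : ℕ → Type*} [∀ j, NormedAddCommGroup (E j)] [∀ j, NormedSpace ℝ (E j)]
    [∀ j, CompleteSpace (E j)]
    (D : Set (lp E 1)) (hD : IsWeaklyCompact D) :
    ∀ δ : ℝ, 0 < δ → ∃ n : ℕ, ∀ y ∈ D, ∑' j : ℕ, ‖(y : ∀ j, E j) (n + j)‖ ≤ δ := by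
  intro δ hδ
  by_contra hcon
  push_neg at hcon
  choose v hvD hvtl using hcon
  have hvtl' : ∀ n, δ < tl (v n) n := hvtl
  obtain ⟨y₀, hy₀D, Hy₀⟩ := weak_cluster D hD v hvD
  obtain ⟨n₁, -, hn₁⟩ := exists_tl_lt y₀ (show (0:ℝ) < δ / 10 by linarith) 0
  set ε := δ / 100 with hε_def
  have hε : 0 < ε := by positivity
  obtain ⟨b, w, hb0, hbmono, hwD, hwδ, hwε, hclose⟩ :=
    construction D δ ε hε y₀ n₁ v hvD hvtl' Hy₀
  have hbsm : StrictMono b := strictMono_nat_of_lt_succ hbmono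
  classical
  set idx : ℕ → ℕ := fun j => Nat.findGreatest (fun k => b k ≤ j) j with hidx_def
  have hidx : ∀ k j, b k ≤ j → j < b (k + 1) → idx j = k := by
    intro k j h1 h2
    apply Nat.findGreatest_eq_iff.2
    refine ⟨le_trans hbsm.le_apply h1, fun _ => h1, ?_⟩
    intro n hn1 hn2 hP
    have : b (k + 1) ≤ b n := hbsm.monotone hn1
    omega
  set g : ∀ j, E j →L[ℝ] ℝ := fun j =>
    if n₁ ≤ j then gch j ((w (idx j) : ∀ i, E i) j) else 0 with hg_def
  have hgnorm : ∀ j, ‖g j‖ ≤ 1 := fun j => by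
    simp only [hg_def]
    split
    · exact gch_norm _ _
    · simp
  have hgblk : ∀ k j, b k ≤ j → j < b (k + 1) → g j = gch j ((w k : ∀ i, E i) j) := by
    intro k j h1 h2
    have hbn₁ : n₁ ≤ j := by
      have : b 0 ≤ b k := hbsm.monotone (Nat.zero_le k)
      omega
    rw [hg_def]
    simp only [if_pos hbn₁, hidx k j h1 h2]
  set GK : ℕ → ∀ j, E j →L[ℝ] ℝ := fun K j => if b K ≤ j then g j else 0 with hGK_def
  have hGKnorm : ∀ K j, ‖GK K j‖ ≤ 1 := fun K j => by
    simp only [hGK_def]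
    split
    · exact hgnorm j
    · simp
  set FK : ℕ → (lp E 1 →L[ℝ] ℝ) := fun K => Phi (GK K) (hGKnorm K) with hFK_def
  -- Estimate A : for K ≤ k, δ/2 < FK K (w k)
  have estA : ∀ K k, K ≤ k → δ / 2 < FK K (w k) := by
    intro K k hKk
    have hbKk : b K ≤ b k := hbsm.monotone hKk
    have hbk1 : b k ≤ b (k + 1) := hbsm.monotone (Nat.le_succ k)
    have hsplit := Phi_split (GK K) (hGKnorm K) (w k) (b (k + 1))
    have htail := abs_tsum_tail_le (GK K) (hGKnorm K) (w k) (b (k + 1))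
    -- head = mid + hump
    have hhead : ∑ j ∈ Finset.range (b (k + 1)), GK K j ((w k : ∀ i, E i) j)
        = ∑ j ∈ Finset.Ico (b K) (b (k + 1)), g j ((w k : ∀ i, E i) j) := by
      rw [← Finset.sum_subset (show Finset.Ico (b K) (b (k + 1)) ⊆ Finset.range (b (k + 1)) by
          intro x hx
          simp only [Finset.mem_Ico] at hx
          exact Finset.mem_range.2 hx.2)
        (fun x hx hnx => by
          simp only [hGK_def]
          simp only [Finset.mem_range] at hx
          simp only [Finset.mem_Ico] at hnx
          rw [if_neg (by omega)]
          simp)]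
      apply Finset.sum_congr rfl
      intro j hj
      simp only [Finset.mem_Ico] at hj
      simp only [hGK_def]
      rw [if_pos hj.1]
    have hmid_blocks : ∀ u : lp E 1, ∑ l ∈ Finset.Ico K k, blkF (b l) (b (l + 1)) (w l) u
        = ∑ j ∈ Finset.Ico (b K) (b k), g j ((u : ∀ i, E i) j) := by
      intro u
      rw [← sum_blocks b hbsm.monotone (fun j => g j ((u : ∀ i, E i) j)) hKk]
      apply Finset.sum_congr rfl
      intro l hl
      simp only [Finset.mem_Ico] at hl
      rw [blkF_apply]
      apply Finset.sum_congr rfl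
      intro j hj
      simp only [Finset.mem_Ico] at hj
      rw [hgblk l j hj.1 hj.2]
    have hM : |∑ j ∈ Finset.Ico (b K) (b k), g j ((w k : ∀ i, E i) j)
        - ∑ j ∈ Finset.Ico (b K) (b k), g j ((y₀ : ∀ i, E i) j)| ≤ ε := by
      rw [← hmid_blocks (w k), ← hmid_blocks y₀, ← Finset.sum_sub_distrib]
      calc |∑ l ∈ Finset.Ico K k, (blkF (b l) (b (l + 1)) (w l) (w k)
              - blkF (b l) (b (l + 1)) (w l) y₀)|
          ≤ ∑ l ∈ Finset.Ico K k, |blkF (b l) (b (l + 1)) (w l) (w k)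
              - blkF (b l) (b (l + 1)) (w l) y₀| := Finset.abs_sum_le_sum_abs _ _
        _ ≤ ∑ _l ∈ Finset.Ico K k, ε / (k + 1) :=
            Finset.sum_le_sum fun l hl => le_of_lt
              (hclose k l (by
                simp only [Finset.mem_Ico] at hl
                omega))
        _ = (k - K : ℕ) * (ε / (k + 1)) := by
            rw [Finset.sum_const, Nat.card_Ico, nsmul_eq_mul]
        _ ≤ ε := by
            rw [div_eq_mul_inv]
            have h1 : ((k - K : ℕ) : ℝ) ≤ (k + 1 : ℝ) := by
              have : (k - K : ℕ) ≤ k + 1 := by omega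
              exact_mod_cast le_trans (Nat.cast_le.2 this) (by norm_num)
            have h2 : (0:ℝ) < (k + 1 : ℝ) := by positivity
            calc (k - K : ℕ) * (ε * ((k:ℝ) + 1)⁻¹) ≤ ((k:ℝ) + 1) * (ε * ((k:ℝ) + 1)⁻¹) := by
                  apply mul_le_mul_of_nonneg_right _ (by positivity)
                  exact_mod_cast h1
              _ = ε := by field_simp
    have hMy : |∑ j ∈ Finset.Ico (b K) (b k), g j ((y₀ : ∀ i, E i) j)| ≤ tl y₀ n₁ := by
      calc |∑ j ∈ Finset.Ico (b K) (b k), g j ((y₀ : ∀ i, E i) j)|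
          ≤ ∑ j ∈ Finset.Ico (b K) (b k), |g j ((y₀ : ∀ i, E i) j)| :=
            Finset.abs_sum_le_sum_abs _ _
        _ ≤ ∑ j ∈ Finset.Ico (b K) (b k), ‖(y₀ : ∀ i, E i) j‖ := by
            apply Finset.sum_le_sum
            intro j hj
            rw [← Real.norm_eq_abs]
            calc ‖g j ((y₀ : ∀ i, E i) j)‖ ≤ ‖g j‖ * ‖(y₀ : ∀ i, E i) j‖ := (g j).le_opNorm _
              _ ≤ 1 * ‖(y₀ : ∀ i, E i) j‖ :=
                  mul_le_mul_of_nonneg_right (hgnorm j) (norm_nonneg _)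
              _ = ‖(y₀ : ∀ i, E i) j‖ := one_mul _
        _ = tl y₀ (b K) - tl y₀ (b k) := by
            have := tl_split y₀ hbKk
            linarith
        _ ≤ tl y₀ (b K) := by
            have := tl_nonneg y₀ (b k)
            linarith
        _ ≤ tl y₀ n₁ := by
            have : b 0 ≤ b K := hbsm.monotone (Nat.zero_le K)
            exact tl_anti y₀ (by omega)
    have hhump : ∑ j ∈ Finset.Ico (b k) (b (k + 1)), g j ((w k : ∀ i, E i) j)
        = tl (w k) (b k) - tl (w k) (b (k + 1)) := by
      have hs := tl_split (w k) hbk1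
      have : ∑ j ∈ Finset.Ico (b k) (b (k + 1)), g j ((w k : ∀ i, E i) j)
          = ∑ j ∈ Finset.Ico (b k) (b (k + 1)), ‖(w k : ∀ i, E i) j‖ := by
        apply Finset.sum_congr rfl
        intro j hj
        simp only [Finset.mem_Ico] at hj
        rw [hgblk k j hj.1 hj.2, gch_val]
      rw [this]
      linarith
    have hIcosplit : ∑ j ∈ Finset.Ico (b K) (b (k + 1)), g j ((w k : ∀ i, E i) j)
        = ∑ j ∈ Finset.Ico (b K) (b k), g j ((w k : ∀ i, E i) j)
          + ∑ j ∈ Finset.Ico (b k) (b (k + 1)), g j ((w k : ∀ i, E i) j) :=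
      (Finset.sum_Ico_consecutive _ hbKk hbk1).symm
    have habs := abs_le.1 htail
    have habsM := abs_le.1 hM
    have habsMy := abs_le.1 hMy
    have h1 : δ < tl (w k) (b k) := hwδ k
    have h2 : tl (w k) (b (k + 1)) < ε := hwε k
    rw [hFK_def] at *
    rw [hsplit, hhead, hIcosplit, hhump]
    simp only [hε_def] at *
    linarith
  -- Estimate B
  have estB : ∀ (K : ℕ) (y : lp E 1), |FK K y| ≤ tl y (b K) := by
    intro K y
    apply abs_Phi_le
    intro j hj
    simp only [hGK_def]
    rw [if_neg (by omega)]
  -- second cluster point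
  obtain ⟨y', hy'D, Hy'⟩ := weak_cluster D hD w hwD
  obtain ⟨K₀, -, hK₀⟩ := exists_tl_lt y' (show (0:ℝ) < δ / 4 by linarith) 0
  have hbK₀ : tl y' (b K₀) ≤ tl y' K₀ := tl_anti y' hbsm.le_apply
  obtain ⟨n, hn1, hn2⟩ := Hy' 1 (fun _ => FK K₀) (δ / 4) (by linarith) K₀
  have h3 := hn2 0 Nat.one_pos
  have h4 := estA K₀ n hn1
  have h5 := estB K₀ y'
  have h6 := abs_lt.1 h3
  have h7 := abs_le.1 h5
  linarith
end

section
/- Let R be a reflexive Banach space with a normalized 1-unconditional basis (r_j) and let (E_j) be Banach spaces. A bounded subset A of the direct sum X = R(E_j) is relatively weakly compact if and only if P_j(A) is relatively weakly compact in E_j for every j, where P_j : X → E_j is the j-th coordinate projection. -/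
set_option linter.unusedSectionVars false

open Filter Topology

/-- A set is relatively weakly compact if its closure in the weak topology is compact. -/
def IsRelWeaklyCompact {E : Type*} [NormedAddCommGroup E] [NormedSpace ℝ E] (D : Set E) :
    Prop :=
  IsCompact (closure (toWeakSpace ℝ E '' D))


section WeakAux
variable {E : Type*} [NormedAddCommGroup E] [NormedSpace ℝ E]

lemma ws_inj : Function.Injective ((topDualPairing ℝ E).flip) := by
  intro x y h
  have hxy : ∀ f : E →L[ℝ] ℝ, f (x - y) = 0 := by
    intro f
    have := congrArg (fun φ => φ f) h
    simp only [LinearMap.flip_apply, topDualPairing_apply] at this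
    simp [this]
  exact sub_eq_zero.mp (NormedSpace.eq_zero_of_forall_dual_eq_zero ℝ hxy)

lemma ws_t2 : T2Space (WeakSpace ℝ E) :=
  (WeakBilin.isEmbedding (B := (topDualPairing ℝ E).flip) ws_inj).t2Space

lemma ws_tendsto_iff {α : Type*} {l : Filter α} {u : α → E} {y : E} :
    Tendsto (fun a => toWeakSpace ℝ E (u a)) l (𝓝 (toWeakSpace ℝ E y)) ↔
      ∀ f : E →L[ℝ] ℝ, Tendsto (fun a => f (u a)) l (𝓝 (f y)) :=
  WeakBilin.tendsto_iff_forall_eval_tendsto _ ws_inj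

lemma ws_norm_le_of_tendsto {α : Type*} {l : Filter α} [l.NeBot] {u : α → E} {y : E} {C : ℝ}
    (h : ∀ f : E →L[ℝ] ℝ, Tendsto (fun a => f (u a)) l (𝓝 (f y)))
    (hb : ∀ᶠ a in l, ‖u a‖ ≤ C) : ‖y‖ ≤ C := by
  obtain ⟨g, hg1, hgy⟩ := exists_dual_vector'' ℝ y
  have hyg : ‖y‖ = g y := by exact_mod_cast hgy.symm
  rw [hyg]
  refine le_of_tendsto (h g) (hb.mono fun a ha => ?_)
  calc g (u a) ≤ |g (u a)| := le_abs_self _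
    _ ≤ ‖g‖ * ‖u a‖ := g.le_opNorm _
    _ ≤ 1 * C := by
        have h0 : (0:ℝ) ≤ ‖u a‖ := norm_nonneg _
        nlinarith [norm_nonneg g]
    _ = C := one_mul C

lemma ws_cluster_eq_lim {α : Type*} {l : Filter α} [l.NeBot] {u : α → ℝ} {c L : ℝ}
    (hc : ClusterPt c (Filter.map u l)) (hl : Tendsto u l (𝓝 L)) : c = L :=
  eq_of_nhds_neBot (NeBot.mono hc (inf_le_inf_left _ hl))

end WeakAux

section RAux
variable {R : Type*} [NormedAddCommGroup R] [NormedSpace ℝ R]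
variable {r : ℕ → R}

lemma uncond_mono
    (huncond : ∀ (a c : ℕ → ℝ) (s : Finset ℕ), (∀ j, |a j| ≤ |c j|) →
      ‖∑ j ∈ s, a j • r j‖ ≤ ‖∑ j ∈ s, c j • r j‖)
    (a c : ℕ → ℝ) {s t : Finset ℕ} (hst : s ⊆ t)
    (h : ∀ j ∈ s, |a j| ≤ |c j|) :
    ‖∑ j ∈ s, a j • r j‖ ≤ ‖∑ j ∈ t, c j • r j‖ := by
  have key : ∑ j ∈ s, a j • r j = ∑ j ∈ t, (fun j => if j ∈ s then a j else 0) j • r j := by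
    rw [← Finset.sum_subset hst (fun x _ hx => by simp [hx])]
    exact Finset.sum_congr rfl fun j hj => by simp [hj]
  rw [key]
  refine huncond _ c t fun j => ?_
  by_cases hj : j ∈ s
  · simpa [hj] using h j hj
  · simp [hj]

lemma uncond_eq
    (huncond : ∀ (a c : ℕ → ℝ) (s : Finset ℕ), (∀ j, |a j| ≤ |c j|) →
      ‖∑ j ∈ s, a j • r j‖ ≤ ‖∑ j ∈ s, c j • r j‖)
    (a c : ℕ → ℝ) (s : Finset ℕ) (h : ∀ j, |a j| = |c j|) :
    ‖∑ j ∈ s, a j • r j‖ = ‖∑ j ∈ s, c j • r j‖ :=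
  le_antisymm (huncond a c s fun j => (h j).le) (huncond c a s fun j => (h j).ge)

lemma uncond_le_tsum
    (huncond : ∀ (a c : ℕ → ℝ) (s : Finset ℕ), (∀ j, |a j| ≤ |c j|) →
      ‖∑ j ∈ s, a j • r j‖ ≤ ‖∑ j ∈ s, c j • r j‖)
    {c : ℕ → ℝ} {σ : R} (hc : HasSum (fun j => c j • r j) σ)
    (a : ℕ → ℝ) (s : Finset ℕ) (h : ∀ j ∈ s, |a j| ≤ |c j|) :
    ‖∑ j ∈ s, a j • r j‖ ≤ ‖σ‖ := by
  have h1 : Tendsto (fun t : Finset ℕ => ‖∑ j ∈ t, c j • r j‖) atTop (𝓝 ‖σ‖) :=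
    (continuous_norm.continuousAt.tendsto.comp hc)
  refine ge_of_tendsto h1 ?_
  filter_upwards [Filter.eventually_ge_atTop s] with t ht
  exact uncond_mono huncond a c ht h

lemma r_li (hr : ∀ j, ‖r j‖ = 1)
    (huncond : ∀ (a c : ℕ → ℝ) (s : Finset ℕ), (∀ j, |a j| ≤ |c j|) →
      ‖∑ j ∈ s, a j • r j‖ ≤ ‖∑ j ∈ s, c j • r j‖) :
    LinearIndependent ℝ r := by
  rw [linearIndependent_iff']
  intro s g hg i hi
  have h1 : ‖∑ j ∈ ({i} : Finset ℕ), g j • r j‖ ≤ ‖∑ j ∈ s, g j • r j‖ :=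
    uncond_mono huncond g g (Finset.singleton_subset_iff.mpr hi) (fun _ _ => le_rfl)
  rw [hg] at h1
  simp only [Finset.sum_singleton, norm_smul, hr i, mul_one, norm_zero, Real.norm_eq_abs] at h1
  exact abs_eq_zero.mp (le_antisymm h1 (abs_nonneg _))

end RAux

section ConstrAux
variable {R : Type*} [NormedAddCommGroup R] [NormedSpace ℝ R]
variable {F : Type*} [NormedAddCommGroup F] [NormedSpace ℝ F]

lemma constr_bound {ι : Type*} {v : ι → R} (hv : LinearIndependent ℝ v) (g : ι → F) (C : ℝ)
    (h : ∀ (s : Finset ι) (c : ι → ℝ), ‖∑ i ∈ s, c i • g i‖ ≤ C * ‖∑ i ∈ s, c i • v i‖)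
    (z : Submodule.span ℝ (Set.range v)) :
    ‖(Module.Basis.span hv).constr ℝ g z‖ ≤ C * ‖(z : R)‖ := by
  obtain ⟨c, hc⟩ := Finsupp.mem_span_range_iff_exists_finsupp.mp z.2
  have hz : z = ∑ i ∈ c.support, c i • (Module.Basis.span hv) i := by
    apply Subtype.ext
    push_cast
    simp only [Module.Basis.span_apply]
    rw [← hc]
    rfl
  have happ : (Module.Basis.span hv).constr ℝ g z = ∑ i ∈ c.support, c i • g i := by
    rw [hz, map_sum]
    simp only [map_smul, Module.Basis.constr_basis]
  have hnz : ‖(z : R)‖ = ‖∑ i ∈ c.support, c i • v i‖ := by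
    congr 1
    rw [hz]
    push_cast
    simp [Module.Basis.span_apply]
  rw [happ, hnz]
  exact h c.support c

end ConstrAux

section ProjAux
variable {R : Type*} [NormedAddCommGroup R] [NormedSpace ℝ R] [CompleteSpace R]
variable {r : ℕ → R}

lemma proj_exists (hr : ∀ j, ‖r j‖ = 1)
    (hbasis : ∀ s : R, s ∈ closure (Submodule.span ℝ (Set.range r) : Set R))
    (huncond : ∀ (a c : ℕ → ℝ) (s : Finset ℕ), (∀ j, |a j| ≤ |c j|) →
      ‖∑ j ∈ s, a j • r j‖ ≤ ‖∑ j ∈ s, c j • r j‖) :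
    ∃ Pi : Finset ℕ → (R →L[ℝ] R),
      (∀ t x, ‖Pi t x‖ ≤ ‖x‖) ∧
      (∀ t j, Pi t (r j) = if j ∈ t then r j else 0) ∧
      (∀ x, Tendsto (fun t => Pi t x) atTop (𝓝 x)) := by
  classical
  have li : LinearIndependent ℝ r := r_li hr huncond
  set V : Submodule ℝ R := Submodule.span ℝ (Set.range r) with hV
  have hdenseV : Dense (V : Set R) := fun x => hbasis x
  have hdense : DenseRange (V.subtypeL) := hdenseV.denseRange_val
  have hui : IsUniformInducing (V.subtypeL) := isUniformEmbedding_subtype_val.isUniformInducing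
  -- the finite-rank coordinate projections
  have key : ∀ t : Finset ℕ, ∀ (s : Finset ℕ) (c : ℕ → ℝ),
      ‖∑ i ∈ s, c i • (if i ∈ t then r i else 0)‖ ≤ 1 * ‖∑ i ∈ s, c i • r i‖ := by
    intro t s c
    have : ∑ i ∈ s, c i • (if i ∈ t then r i else 0)
        = ∑ i ∈ s, (if i ∈ t then c i else 0) • r i := by
      refine Finset.sum_congr rfl fun i _ => ?_
      by_cases hi : i ∈ t <;> simp [hi]
    rw [this, one_mul]
    refine huncond _ c s fun j => ?_
    by_cases hj : j ∈ t <;> simp [hj]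
  set g : Finset ℕ → ℕ → R := fun t j => if j ∈ t then r j else 0 with hg
  have hb : ∀ t (z : V), ‖(Module.Basis.span li).constr ℝ (g t) z‖ ≤ 1 * ‖(z : R)‖ :=
    fun t z => constr_bound li (g t) 1 (key t) z
  set L : Finset ℕ → (V →L[ℝ] R) := fun t =>
    LinearMap.mkContinuous ((Module.Basis.span li).constr ℝ (g t)) 1
      (fun z => by simpa using hb t z) with hL
  set Pi : Finset ℕ → (R →L[ℝ] R) := fun t => (L t).extend V.subtypeL with hPi
  have hPiV : ∀ t (z : V), Pi t (z : R) = (Module.Basis.span li).constr ℝ (g t) z := by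
    intro t z
    exact ContinuousLinearMap.extend_eq _ hdense hui _
  have hPir : ∀ t j, Pi t (r j) = if j ∈ t then r j else 0 := by
    intro t j
    have hmem : r j ∈ V := Submodule.subset_span (Set.mem_range_self j)
    have h1 : Pi t (r j) = (Module.Basis.span li).constr ℝ (g t) ⟨r j, hmem⟩ := hPiV t ⟨r j, hmem⟩
    have h2 : (⟨r j, hmem⟩ : V) = Module.Basis.span li j := by
      apply Subtype.ext; simp [Module.Basis.span_apply]
    rw [h1, h2, Module.Basis.constr_basis]
  have hPinorm : ∀ t x, ‖Pi t x‖ ≤ ‖x‖ := by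
    intro t x
    have hclosed : IsClosed {x : R | ‖Pi t x‖ ≤ ‖x‖} :=
      isClosed_le (continuous_norm.comp (Pi t).continuous) continuous_norm
    have hsub : (V : Set R) ⊆ {x : R | ‖Pi t x‖ ≤ ‖x‖} := by
      intro z hz
      have := hb t ⟨z, hz⟩
      simpa [hPiV t ⟨z, hz⟩] using this
    have : closure (V : Set R) ⊆ {x : R | ‖Pi t x‖ ≤ ‖x‖} :=
      hclosed.closure_subset_iff.mpr hsub
    exact this (hbasis x)
  refine ⟨Pi, hPinorm, hPir, ?_⟩
  intro x
  rw [Metric.tendsto_atTop]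
  intro ε hε
  obtain ⟨z, hzV, hzx⟩ : ∃ z ∈ (V : Set R), dist x z < ε / 3 :=
    Metric.mem_closure_iff.mp (hbasis x) (ε / 3) (by linarith)
  obtain ⟨c, hc⟩ := Finsupp.mem_span_range_iff_exists_finsupp.mp hzV
  refine ⟨c.support, fun t ht => ?_⟩
  have hPz : Pi t z = z := by
    rw [← hc]
    rw [Finsupp.sum, map_sum]
    refine Finset.sum_congr rfl fun i hi => ?_
    rw [map_smul, hPir t i, if_pos (ht hi)]
  have : Pi t x - x = Pi t (x - z) + (z - x) := by
    rw [map_sub, hPz]; abel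
  rw [dist_eq_norm, this]
  calc ‖Pi t (x - z) + (z - x)‖ ≤ ‖Pi t (x - z)‖ + ‖z - x‖ := norm_add_le _ _
    _ ≤ ‖x - z‖ + ‖z - x‖ := by
        have := hPinorm t (x - z); linarith [norm_sub_rev z x ▸ this]
    _ < ε := by
        rw [dist_eq_norm] at hzx
        rw [norm_sub_rev z x]
        linarith

end ProjAux

section BCAux
variable {R : Type*} [NormedAddCommGroup R] [NormedSpace ℝ R] [CompleteSpace R]
variable {r : ℕ → R}

lemma ball_wc (hrefl : IsCompact (toWeakSpace ℝ R '' Metric.closedBall (0 : R) 1))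
    {M : ℝ} (hM : 0 < M) :
    IsCompact (toWeakSpace ℝ R '' Metric.closedBall (0 : R) M) := by
  have hset : Metric.closedBall (0 : R) M = (fun y : R => M • y) '' Metric.closedBall 0 1 := by
    ext x
    simp only [Metric.mem_closedBall, dist_zero_right, Set.mem_image]
    constructor
    · intro hx
      refine ⟨M⁻¹ • x, ?_, by rw [smul_smul, mul_inv_cancel₀ hM.ne', one_smul]⟩
      rw [norm_smul, norm_inv, Real.norm_eq_abs, abs_of_pos hM, inv_mul_le_iff₀ hM]
      linarith
    · rintro ⟨y, hy, rfl⟩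
      rw [norm_smul, Real.norm_eq_abs, abs_of_pos hM]
      calc M * ‖y‖ ≤ M * 1 := by nlinarith
        _ = M := mul_one M
  have himg : toWeakSpace ℝ R '' Metric.closedBall (0 : R) M
      = (WeakSpace.map (M • ContinuousLinearMap.id ℝ R)) ''
          (toWeakSpace ℝ R '' Metric.closedBall (0 : R) 1) := by
    rw [hset, Set.image_image, Set.image_image]
    rfl
  rw [himg]
  exact hrefl.image (WeakSpace.map (M • ContinuousLinearMap.id ℝ R)).continuous

lemma bounded_complete
    (huncond : ∀ (a c : ℕ → ℝ) (s : Finset ℕ), (∀ j, |a j| ≤ |c j|) →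
      ‖∑ j ∈ s, a j • r j‖ ≤ ‖∑ j ∈ s, c j • r j‖)
    (Pi : Finset ℕ → (R →L[ℝ] R))
    (hPir : ∀ t j, Pi t (r j) = if j ∈ t then r j else 0)
    (hPilim : ∀ x : R, Tendsto (fun t => Pi t x) atTop (𝓝 x))
    (hrefl : IsCompact (toWeakSpace ℝ R '' Metric.closedBall (0 : R) 1))
    (a : ℕ → ℝ) {M : ℝ} (hM : 0 < M)
    (hb : ∀ s : Finset ℕ, ‖∑ j ∈ s, a j • r j‖ ≤ M) :
    ∃ v : R, HasSum (fun j => a j • r j) v ∧ ‖v‖ ≤ M := by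
  classical
  set S : Finset ℕ → R := fun s => ∑ j ∈ s, a j • r j with hS
  set l : Filter (WeakSpace ℝ R) := Filter.map (fun s => toWeakSpace ℝ R (S s)) atTop with hl
  have hlp : l ≤ 𝓟 (toWeakSpace ℝ R '' Metric.closedBall (0 : R) M) := by
    rw [hl, Filter.le_principal_iff, Filter.mem_map]
    filter_upwards with s
    exact Set.mem_image_of_mem _ (by simpa [dist_zero_right] using hb s)
  haveI : l.NeBot := Filter.map_neBot
  obtain ⟨w, hwmem, hwcl⟩ := (ball_wc hrefl hM).exists_clusterPt hlp
  obtain ⟨v, hvball, hvw⟩ := hwmem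
  -- for each functional, the coefficient series is absolutely summable
  have habs : ∀ f : R →L[ℝ] ℝ, Summable (fun j => a j * f (r j)) := by
    intro f
    refine Summable.of_abs (summable_of_sum_le (c := ‖f‖ * M) (fun j => abs_nonneg _) fun u => ?_)
    set a' : ℕ → ℝ := fun j => if 0 ≤ a j * f (r j) then a j else -a j with ha'
    have h1 : ∀ j, |a j * f (r j)| = a' j * f (r j) := by
      intro j
      by_cases hj : 0 ≤ a j * f (r j)
      · rw [abs_of_nonneg hj, ha']; simp [hj]
      · rw [abs_of_neg (lt_of_not_ge hj), ha']; simp [hj]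
    calc ∑ j ∈ u, |a j * f (r j)| = ∑ j ∈ u, a' j * f (r j) :=
          Finset.sum_congr rfl fun j _ => h1 j
      _ = f (∑ j ∈ u, a' j • r j) := by
            rw [map_sum]
            refine Finset.sum_congr rfl fun j _ => ?_
            rw [map_smul]
            rfl
      _ ≤ ‖f (∑ j ∈ u, a' j • r j)‖ := le_abs_self _
      _ ≤ ‖f‖ * ‖∑ j ∈ u, a' j • r j‖ := f.le_opNorm _
      _ ≤ ‖f‖ * ‖∑ j ∈ u, a j • r j‖ := by
            have := huncond a' a u (fun j => by by_cases hj : 0 ≤ a j * f (r j) <;> simp [ha', hj, abs_neg])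
            nlinarith [norm_nonneg f]
      _ ≤ ‖f‖ * M := by nlinarith [norm_nonneg f, hb u]
  have hpartial : ∀ f : R →L[ℝ] ℝ, ∀ s : Finset ℕ, f (S s) = ∑ j ∈ s, a j * f (r j) := by
    intro f s
    rw [hS, map_sum]
    exact Finset.sum_congr rfl fun j _ => by rw [map_smul]; rfl
  have hv_sum : ∀ f : R →L[ℝ] ℝ, HasSum (fun j => a j * f (r j)) (f v) := by
    intro f
    have hsum := (habs f).hasSum
    have htend : Tendsto (fun s => f (S s)) atTop (𝓝 (∑' j, a j * f (r j))) := by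
      have := hsum
      unfold HasSum at this
      convert this using 2
      exact hpartial f _
      rfl
    have hcont : Continuous fun x : WeakSpace ℝ R =>
        ((topDualPairing ℝ R).flip x) f := WeakBilin.eval_continuous _ f
    have hclf : ClusterPt (f v) (Filter.map (fun s => f (S s)) atTop) := by
      have := hwcl.map hcont.continuousAt Filter.tendsto_map
      rw [hl, Filter.map_map] at this
      rw [← hvw] at this
      exact this
    have := ws_cluster_eq_lim hclf htend
    rw [this]
    exact hsum
  -- Pi t v = S t
  have hPiv : ∀ t : Finset ℕ, Pi t v = S t := by
    intro t
    have hzero : ∀ f : R →L[ℝ] ℝ, f (Pi t v - S t) = 0 := by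
      intro f
      have h1 : HasSum (fun j => a j * (f.comp (Pi t)) (r j)) (f (Pi t v)) := hv_sum (f.comp (Pi t))
      have h2 : (fun j => a j * (f.comp (Pi t)) (r j))
          = fun j => if j ∈ t then a j * f (r j) else 0 := by
        funext j
        rw [ContinuousLinearMap.comp_apply, hPir t j]
        by_cases hj : j ∈ t <;> simp [hj]
      rw [h2] at h1
      have h3 : (f (Pi t v)) = ∑ j ∈ t, a j * f (r j) := by
        rw [← h1.tsum_eq, tsum_eq_sum (s := t) (fun j hj => by simp [hj])]
        exact Finset.sum_congr rfl fun j hj => by simp [hj]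
      rw [map_sub, h3, hpartial f t, sub_self]
    have := NormedSpace.eq_zero_of_forall_dual_eq_zero ℝ hzero
    exact sub_eq_zero.mp this
  have hconv : Tendsto S atTop (𝓝 v) := by
    have := hPilim v
    simpa only [hPiv] using this
  refine ⟨v, hconv, ?_⟩
  exact le_of_tendsto (continuous_norm.continuousAt.tendsto.comp hconv)
    (Filter.Eventually.of_forall hb)
end BCAux

lemma ws_clusterPt_apply {E : Type*} [NormedAddCommGroup E] [NormedSpace ℝ E]
    {α : Type*} {L : Filter α} {q : α → E} {v : E}
    (hcl : ClusterPt (toWeakSpace ℝ E v) (Filter.map (fun a => toWeakSpace ℝ E (q a)) L))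
    (g : E →L[ℝ] ℝ) : ClusterPt (g v) (Filter.map (fun a => g (q a)) L) := by
  have hcont : Continuous fun x : WeakSpace ℝ E => ((topDualPairing ℝ E).flip x) g :=
    WeakBilin.eval_continuous _ g
  have := hcl.map hcont.continuousAt Filter.tendsto_map
  rw [Filter.map_map] at this
  exact this

section XAux
variable {R : Type*} [NormedAddCommGroup R] [NormedSpace ℝ R] [CompleteSpace R]
variable {r : ℕ → R}
variable {E : ℕ → Type*} [∀ j, NormedAddCommGroup (E j)] [∀ j, NormedSpace ℝ (E j)]
variable {X : Type*} [NormedAddCommGroup X] [NormedSpace ℝ X] [CompleteSpace X]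
variable {P : ∀ j, X →L[ℝ] E j} {ι : ∀ j, E j →L[ℝ] X}

lemma coord_sum
    (hPι : ∀ j, (P j).comp (ι j) = ContinuousLinearMap.id ℝ (E j))
    (hPιne : ∀ j k, j ≠ k → (P j).comp (ι k) = 0)
    (e : ∀ j, E j) (u : Finset ℕ) (k : ℕ) :
    P k (∑ j ∈ u, ι j (e j)) = if k ∈ u then e k else 0 := by
  classical
  rw [map_sum]
  have : ∀ j ∈ u, P k (ι j (e j)) = if j = k then e k else 0 := by
    intro j _
    by_cases hj : j = k
    · subst hj
      have := congrArg (fun T => T (e j)) (hPι j)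
      simpa using this
    · have := congrArg (fun T => T (e j)) (hPιne k j (Ne.symm hj))
      simp only [ContinuousLinearMap.comp_apply, ContinuousLinearMap.zero_apply] at this
      rw [this, if_neg hj]
  rw [Finset.sum_congr rfl this, Finset.sum_ite_eq' u k (fun _ => e k)]

lemma coord_norm_le
    (huncond : ∀ (a c : ℕ → ℝ) (s : Finset ℕ), (∀ j, |a j| ≤ |c j|) →
      ‖∑ j ∈ s, a j • r j‖ ≤ ‖∑ j ∈ s, c j • r j‖)
    (hnormX : ∀ x : X, ∃ s : R, HasSum (fun j => ‖P j x‖ • r j) s ∧ ‖x‖ = ‖s‖)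
    (x z : X) (h : ∀ j, ‖P j z‖ ≤ ‖P j x‖) : ‖z‖ ≤ ‖x‖ := by
  obtain ⟨σz, hσz, hz⟩ := hnormX z
  obtain ⟨σx, hσx, hx⟩ := hnormX x
  rw [hz, hx]
  have htend : Tendsto (fun t : Finset ℕ => ‖∑ j ∈ t, ‖P j z‖ • r j‖) atTop (𝓝 ‖σz‖) :=
    continuous_norm.continuousAt.tendsto.comp hσz
  refine le_of_tendsto htend (Filter.Eventually.of_forall fun t => ?_)
  exact uncond_le_tsum huncond hσx _ t fun j _ => by
    rw [abs_of_nonneg (norm_nonneg _), abs_of_nonneg (norm_nonneg _)]; exact h j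

lemma fin_support_norm
    (hnormX : ∀ x : X, ∃ s : R, HasSum (fun j => ‖P j x‖ • r j) s ∧ ‖x‖ = ‖s‖)
    (x : X) (u : Finset ℕ) (h : ∀ j ∉ u, P j x = 0) :
    ‖x‖ = ‖∑ j ∈ u, ‖P j x‖ • r j‖ := by
  obtain ⟨σ, hσ, hx⟩ := hnormX x
  have h2 : HasSum (fun j => ‖P j x‖ • r j) (∑ j ∈ u, ‖P j x‖ • r j) := by
    refine hasSum_sum_of_ne_finset_zero fun j hj => ?_
    rw [h j hj, norm_zero, zero_smul]
  rw [hx, hσ.unique h2]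

end XAux

section Shrink
variable {R : Type*} [NormedAddCommGroup R] [NormedSpace ℝ R] [CompleteSpace R]
variable {r : ℕ → R}
variable {E : ℕ → Type*} [∀ j, NormedAddCommGroup (E j)] [∀ j, NormedSpace ℝ (E j)]
variable {X : Type*} [NormedAddCommGroup X] [NormedSpace ℝ X] [CompleteSpace X]
variable {P : ∀ j, X →L[ℝ] E j} {ι : ∀ j, E j →L[ℝ] X}

lemma shrinking
    (hrefl : IsCompact (toWeakSpace ℝ R '' Metric.closedBall (0 : R) 1))
    (hr : ∀ j, ‖r j‖ = 1)
    (hbasis : ∀ s : R, s ∈ closure (Submodule.span ℝ (Set.range r) : Set R))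
    (huncond : ∀ (a c : ℕ → ℝ) (s : Finset ℕ), (∀ j, |a j| ≤ |c j|) →
      ‖∑ j ∈ s, a j • r j‖ ≤ ‖∑ j ∈ s, c j • r j‖)
    (hPι : ∀ j, (P j).comp (ι j) = ContinuousLinearMap.id ℝ (E j))
    (hPιne : ∀ j k, j ≠ k → (P j).comp (ι k) = 0)
    (hexp : ∀ x : X, HasSum (fun j => ι j (P j x)) x)
    (hnormX : ∀ x : X, ∃ s : R, HasSum (fun j => ‖P j x‖ • r j) s ∧ ‖x‖ = ‖s‖)
    (f : X →L[ℝ] ℝ) {ε : ℝ} (hε : 0 < ε) :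
    ∃ s : Finset ℕ, ∀ x : X, ‖x‖ ≤ 1 → |f x - f (∑ j ∈ s, ι j (P j x))| ≤ ε := by
  classical
  by_contra hcon
  push_neg at hcon
  -- Step 1: selection of disjointly supported almost norming blocks
  have hsel : ∀ S : Finset ℕ, ∃ (w : X) (u : Finset ℕ), ‖w‖ ≤ 1 ∧ ε/2 ≤ f w ∧
      (∀ j, j ∉ u → P j w = 0) ∧ Disjoint u S := by
    intro S
    obtain ⟨x, hx1, hx2⟩ := hcon S
    rw [← map_sub] at hx2
    set z := x - ∑ j ∈ S, ι j (P j x) with hzdef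
    have hPz : ∀ k, P k z = if k ∈ S then 0 else P k x := by
      intro k
      rw [hzdef, map_sub, coord_sum hPι hPιne _ S k]
      by_cases hk : k ∈ S <;> simp [hk]
    have hznorm : ‖z‖ ≤ 1 := by
      refine le_trans (coord_norm_le huncond hnormX x z fun j => ?_) hx1
      rw [hPz j]
      by_cases hj : j ∈ S <;> simp [hj]
    have h1 : HasSum (fun j => f (ι j (P j z))) (f z) := (hexp z).mapL f
    have hfsum : Tendsto (fun u : Finset ℕ => f (∑ j ∈ u, ι j (P j z))) atTop (𝓝 (f z)) := by
      unfold HasSum at h1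
      convert h1 using 2 with u
      rw [map_sum]
      rfl
    have hev : ∀ᶠ u : Finset ℕ in atTop, ε/2 ≤ |f (∑ j ∈ u, ι j (P j z))| := by
      have hball := hfsum (Metric.ball_mem_nhds (f z) (half_pos hε))
      rw [Filter.mem_map] at hball
      filter_upwards [hball] with u hu
      rw [Set.mem_preimage, Metric.mem_ball, Real.dist_eq] at hu
      have := abs_sub_abs_le_abs_sub (f z) (f (∑ j ∈ u, ι j (P j z)))
      rw [abs_sub_comm] at this
      linarith
    obtain ⟨u₀, hu₀⟩ := hev.exists
    set w₀ := ∑ j ∈ u₀, ι j (P j z) with hw₀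
    have hPw₀ : ∀ k, P k w₀ = if k ∈ u₀ then P k z else 0 := fun k =>
      coord_sum hPι hPιne _ u₀ k
    have hw₀n : ‖w₀‖ ≤ 1 := by
      refine le_trans (coord_norm_le huncond hnormX z w₀ fun j => ?_) hznorm
      rw [hPw₀ j]
      by_cases hj : j ∈ u₀ <;> simp [hj]
    have hPw₀' : ∀ j, j ∉ u₀ \ S → P j w₀ = 0 := by
      intro j hj
      rw [Finset.mem_sdiff] at hj
      push_neg at hj
      rw [hPw₀ j]
      by_cases hj0 : j ∈ u₀
      · rw [if_pos hj0, hPz j, if_pos (hj hj0)]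
      · rw [if_neg hj0]
    by_cases hsign : 0 ≤ f w₀
    · exact ⟨w₀, u₀ \ S, hw₀n, by rwa [abs_of_nonneg hsign] at hu₀, hPw₀',
        Finset.sdiff_disjoint⟩
    · refine ⟨-w₀, u₀ \ S, by rwa [norm_neg], ?_, fun j hj => by rw [map_neg, hPw₀' j hj, neg_zero],
        Finset.sdiff_disjoint⟩
      rw [map_neg]
      rw [abs_of_neg (lt_of_not_ge hsign)] at hu₀
      exact hu₀
  choose w u hw1 hw2 hw3 hw4 using hsel
  -- Step 2: the recursively accumulated supports
  set g : ℕ → Finset ℕ := fun n => Nat.rec ∅ (fun _ Sk => Sk ∪ u Sk) n with hgdef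
  have hgs : ∀ n, g (n+1) = g n ∪ u (g n) := fun n => rfl
  set W : ℕ → X := fun n => w (g n) with hW
  set U : ℕ → Finset ℕ := fun n => u (g n) with hU
  have hmono : Monotone g := monotone_nat_of_le_succ fun n => by
    rw [hgs n]; exact Finset.subset_union_left
  have hUsub : ∀ n, U n ⊆ g (n+1) := fun n => by
    rw [hgs n]; exact Finset.subset_union_right
  have hUdisj : ∀ m n, m ≠ n → Disjoint (U m) (U n) := by
    have key : ∀ m n, m < n → Disjoint (U m) (U n) := by
      intro m n hmn
      have h1 : U m ⊆ g n := (hUsub m).trans (hmono hmn)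
      exact (Finset.disjoint_of_subset_right h1 (hw4 (g n))).symm
    intro m n hmn
    rcases lt_or_gt_of_ne hmn with h | h
    · exact key m n h
    · exact (key n m h).symm
  set β : ℕ → R := fun n => ∑ j ∈ U n, ‖P j (W n)‖ • r j with hβ
  have hβW : ∀ n, ‖W n‖ = ‖β n‖ := fun n =>
    fin_support_norm hnormX (W n) (U n) (fun j hj => hw3 (g n) j hj)
  have hβnorm : ∀ n, ‖β n‖ ≤ 1 := fun n => (hβW n) ▸ hw1 (g n)
  -- Step 3: lower ℓ¹ estimate
  have hl1 : ∀ (F : Finset ℕ) (lam : ℕ → ℝ),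
      (ε/2) * ∑ n ∈ F, |lam n| ≤ ‖f‖ * ‖∑ n ∈ F, lam n • β n‖ := by
    intro F lam
    set UF := F.biUnion U with hUF
    set b : ℕ → ℝ := fun j => ∑ n ∈ F, lam n * ‖P j (W n)‖ with hb
    set xF := ∑ n ∈ F, |lam n| • W n with hxF
    have hPxF : ∀ j, P j xF = ∑ n ∈ F, |lam n| • P j (W n) := by
      intro j; rw [hxF, map_sum]
      exact Finset.sum_congr rfl fun n _ => (P j).map_smul _ _
    have habs : ∀ j, ‖P j xF‖ = |b j| := by
      intro j
      by_cases hj : ∃ m ∈ F, j ∈ U m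
      · obtain ⟨m, hmF, hmU⟩ := hj
        have huniq : ∀ n, n ≠ m → P j (W n) = 0 := by
          intro n hnm
          exact hw3 (g n) j (Finset.disjoint_left.mp (hUdisj m n (Ne.symm hnm)) hmU)
        have hb1 : b j = lam m * ‖P j (W m)‖ := by
          rw [hb]
          exact Finset.sum_eq_single_of_mem m hmF fun n _ hnm => by
            rw [huniq n hnm, norm_zero, mul_zero]
        have hx1 : P j xF = |lam m| • P j (W m) := by
          rw [hPxF j]
          exact Finset.sum_eq_single_of_mem m hmF fun n _ hnm => by
            rw [huniq n hnm, smul_zero]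
        rw [hb1, hx1, norm_smul, Real.norm_eq_abs, abs_abs, abs_mul,
          abs_of_nonneg (norm_nonneg _)]
      · push_neg at hj
        have hz : ∀ n ∈ F, P j (W n) = 0 := fun n hn => hw3 (g n) j (hj n hn)
        have h1 : P j xF = 0 := by
          rw [hPxF j]; exact Finset.sum_eq_zero fun n hn => by rw [hz n hn, smul_zero]
        have h2 : b j = 0 := by
          rw [hb]; exact Finset.sum_eq_zero fun n hn => by rw [hz n hn, norm_zero, mul_zero]
        rw [h1, h2]; simp
    have hvanish : ∀ j, j ∉ UF → P j xF = 0 := by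
      intro j hj
      rw [hPxF j]
      refine Finset.sum_eq_zero fun n hn => ?_
      have : j ∉ U n := fun hjU => hj (Finset.mem_biUnion.mpr ⟨n, hn, hjU⟩)
      rw [hw3 (g n) j this, smul_zero]
    have hclaim1 : ∑ n ∈ F, lam n • β n = ∑ j ∈ UF, b j • r j := by
      have step1 : ∀ n ∈ F, lam n • β n = ∑ j ∈ UF, (lam n * ‖P j (W n)‖) • r j := by
        intro n hn
        rw [hβ]
        simp only
        rw [Finset.smul_sum]
        rw [Finset.sum_congr rfl (fun j _ => smul_smul (lam n) ‖P j (W n)‖ (r j))]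
        refine Finset.sum_subset (Finset.subset_biUnion_of_mem U hn) fun j _ hjU => ?_
        rw [hw3 (g n) j hjU, norm_zero, mul_zero, zero_smul]
      rw [Finset.sum_congr rfl step1, Finset.sum_comm]
      refine Finset.sum_congr rfl fun j _ => ?_
      rw [hb, ← Finset.sum_smul]
    have hxFnorm : ‖xF‖ = ‖∑ n ∈ F, lam n • β n‖ := by
      rw [hclaim1, fin_support_norm hnormX xF UF hvanish]
      refine uncond_eq huncond _ _ UF fun j => ?_
      rw [abs_of_nonneg (norm_nonneg (P j xF)), habs j]
    have hfxF : (ε/2) * ∑ n ∈ F, |lam n| ≤ f xF := by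
      rw [hxF, map_sum, Finset.mul_sum]
      refine Finset.sum_le_sum fun n hn => ?_
      rw [map_smul, smul_eq_mul]
      have h2 := hw2 (g n)
      have h0 : 0 ≤ |lam n| := abs_nonneg _
      nlinarith
    calc (ε/2) * ∑ n ∈ F, |lam n| ≤ f xF := hfxF
      _ ≤ |f xF| := le_abs_self _
      _ = ‖f xF‖ := (Real.norm_eq_abs _).symm
      _ ≤ ‖f‖ * ‖xF‖ := f.le_opNorm xF
      _ = ‖f‖ * ‖∑ n ∈ F, lam n • β n‖ := by rw [hxFnorm]
  have hfpos : 0 < ‖f‖ := by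
    have h2 : ‖f (W 0)‖ ≤ ‖f‖ * ‖W 0‖ := f.le_opNorm _
    have h3 : f (W 0) ≤ ‖f (W 0)‖ := Real.le_norm_self _
    have h4 := hw1 (g 0)
    nlinarith [norm_nonneg f, hw2 (g 0), norm_nonneg (W 0)]
  -- Step 4: an ℓ¹-functional via Hahn-Banach
  have hli : LinearIndependent ℝ β := by
    rw [linearIndependent_iff']
    intro s lamf hsum i hi
    have h1 := hl1 s lamf
    rw [hsum, norm_zero, mul_zero] at h1
    have hnn : ∀ n ∈ s, 0 ≤ |lamf n| := fun n _ => abs_nonneg _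
    have hsge : 0 ≤ ∑ n ∈ s, |lamf n| := Finset.sum_nonneg hnn
    have hsum0 : ∑ n ∈ s, |lamf n| = 0 := by nlinarith
    exact abs_eq_zero.mp ((Finset.sum_eq_zero_iff_of_nonneg hnn).mp hsum0 i hi)
  set c := ε/(2*‖f‖) with hc
  have hcpos : 0 < c := by rw [hc]; positivity
  have hl1' : ∀ (F : Finset ℕ) (lam : ℕ → ℝ),
      c * ∑ n ∈ F, |lam n| ≤ ‖∑ n ∈ F, lam n • β n‖ := by
    intro F lam
    have h1 := hl1 F lam
    rw [hc, div_mul_eq_mul_div, div_le_iff₀ (by positivity)]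
    nlinarith [norm_nonneg (∑ n ∈ F, lam n • β n)]
  have hφb : ∀ (s : Finset ℕ) (lam : ℕ → ℝ),
      ‖∑ n ∈ s, lam n • (1:ℝ)‖ ≤ c⁻¹ * ‖∑ n ∈ s, lam n • β n‖ := by
    intro s lam
    have h1 : ‖∑ n ∈ s, lam n • (1:ℝ)‖ ≤ ∑ n ∈ s, |lam n| := by
      simp only [smul_eq_mul, mul_one, Real.norm_eq_abs]
      exact Finset.abs_sum_le_sum_abs _ _
    have h2 := hl1' s lam
    rw [inv_mul_eq_div, le_div_iff₀ hcpos]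
    nlinarith
  set φ := LinearMap.mkContinuous ((Module.Basis.span hli).constr ℝ (fun _ => (1:ℝ))) c⁻¹
    (fun z => by simpa using constr_bound hli (fun _ => (1:ℝ)) c⁻¹ hφb z) with hφ
  obtain ⟨h, hext, _⟩ := exists_extension_norm_eq _ φ
  have hhβ : ∀ n, h (β n) = 1 := by
    intro n
    have hmem : β n ∈ Submodule.span ℝ (Set.range β) :=
      Submodule.subset_span (Set.mem_range_self n)
    have h1 : h (β n) = φ ⟨β n, hmem⟩ := hext ⟨β n, hmem⟩
    have h2 : (⟨β n, hmem⟩ : Submodule.span ℝ (Set.range β)) = Module.Basis.span hli n :=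
      Subtype.ext (by simp [Module.Basis.span_apply])
    rw [h1, h2, hφ]
    show ((Module.Basis.span hli).constr ℝ (fun _ => (1:ℝ))) (Module.Basis.span hli n) = 1
    rw [Module.Basis.constr_basis]
  -- Step 5: weak cluster point of the blocks
  set lβ := Filter.map (fun n => toWeakSpace ℝ R (β n)) atTop with hlβ
  have hlβp : lβ ≤ 𝓟 (toWeakSpace ℝ R '' Metric.closedBall (0:R) 1) := by
    rw [hlβ, Filter.le_principal_iff, Filter.mem_map]
    filter_upwards with n
    exact Set.mem_image_of_mem _ (by simpa [dist_zero_right] using hβnorm n)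
  haveI : lβ.NeBot := Filter.map_neBot
  obtain ⟨wβ, hwβmem, hwβcl⟩ := hrefl.exists_clusterPt hlβp
  obtain ⟨binf, _, hbinfw⟩ := hwβmem
  rw [← hbinfw] at hwβcl
  have hb1 : h binf = 1 := by
    have hcl := ws_clusterPt_apply (q := fun n => β n) (v := binf) hwβcl h
    refine ws_cluster_eq_lim hcl ?_
    have heq : (fun n => h (β n)) = fun _ => (1:ℝ) := funext hhβ
    rw [heq]
    exact tendsto_const_nhds
  obtain ⟨Pi, hPin, hPir, hPilim⟩ := proj_exists hr hbasis huncond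
  have hPit0 : ∀ t : Finset ℕ, Pi t binf = 0 := by
    intro t
    have hfinite : {n : ℕ | (U n ∩ t).Nonempty}.Finite := by
      have hsub : {n : ℕ | (U n ∩ t).Nonempty} ⊆ ⋃ j ∈ (t : Set ℕ), {n : ℕ | j ∈ U n} := by
        rintro n ⟨j, hj⟩
        rw [Finset.mem_inter] at hj
        exact Set.mem_biUnion hj.2 hj.1
      refine Set.Finite.subset (Set.Finite.biUnion t.finite_toSet fun j _ => ?_) hsub
      refine Set.Subsingleton.finite fun n1 h1 n2 h2 => ?_
      by_contra hne
      exact Finset.disjoint_left.mp (hUdisj n1 n2 hne) h1 h2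
    have hev : ∀ᶠ n in atTop, Pi t (β n) = 0 := by
      have h0 : {n : ℕ | (U n ∩ t).Nonempty}ᶜ ∈ Filter.cofinite :=
        Filter.mem_cofinite.mpr (by rwa [compl_compl])
      rw [Nat.cofinite_eq_atTop] at h0
      filter_upwards [h0] with n hn
      have hdisjnt : ∀ j ∈ U n, j ∉ t := by
        intro j hjU hjt
        exact hn ⟨j, Finset.mem_inter.mpr ⟨hjU, hjt⟩⟩
      rw [hβ]
      simp only
      rw [map_sum]
      refine Finset.sum_eq_zero fun j hj => ?_
      rw [map_smul, hPir t j, if_neg (hdisjnt j hj), smul_zero]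
    have hzero : ∀ gg : R →L[ℝ] ℝ, gg (Pi t binf) = 0 := by
      intro gg
      have hcl := ws_clusterPt_apply (q := fun n => β n) (v := binf) hwβcl (gg.comp (Pi t))
      have htend : Tendsto (fun n => (gg.comp (Pi t)) (β n)) atTop (𝓝 0) := by
        refine tendsto_const_nhds.congr' ?_
        filter_upwards [hev] with n hn
        simp [hn]
      exact ws_cluster_eq_lim hcl htend
    exact NormedSpace.eq_zero_of_forall_dual_eq_zero ℝ hzero
  have hbinf0 : binf = 0 := by
    have h1 := hPilim binf
    have h2 : Tendsto (fun _ : Finset ℕ => (0:R)) atTop (𝓝 binf) :=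
      h1.congr fun t => hPit0 t
    exact tendsto_nhds_unique h2 tendsto_const_nhds
  rw [hbinf0, map_zero] at hb1
  exact one_ne_zero hb1.symm

end Shrink
set_option maxHeartbeats 2000000 in
/-- In the `R`-direct sum `X = R(E_j)` over a reflexive space `R` with a normalized
1-unconditional basis `(r_j)`, a bounded set `A ⊆ X` is relatively weakly compact iff each
coordinate image `P j '' A` is relatively weakly compact in `E_j`. -/
theorem stmt_7 {R : Type*} [NormedAddCommGroup R] [NormedSpace ℝ R] [CompleteSpace R]
    (hrefl : IsWeaklyCompact (Metric.closedBall (0 : R) 1))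
    (r : ℕ → R) (hr : ∀ j, ‖r j‖ = 1)
    (hbasis : ∀ s : R, s ∈ closure (Submodule.span ℝ (Set.range r) : Set R))
    (huncond : ∀ (a c : ℕ → ℝ) (s : Finset ℕ), (∀ j, |a j| ≤ |c j|) →
      ‖∑ j ∈ s, a j • r j‖ ≤ ‖∑ j ∈ s, c j • r j‖)
    {E : ℕ → Type*} [∀ j, NormedAddCommGroup (E j)] [∀ j, NormedSpace ℝ (E j)]
    [∀ j, CompleteSpace (E j)]
    {X : Type*} [NormedAddCommGroup X] [NormedSpace ℝ X] [CompleteSpace X]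
    (P : ∀ j, X →L[ℝ] E j) (ι : ∀ j, E j →L[ℝ] X)
    (hPι : ∀ j, (P j).comp (ι j) = ContinuousLinearMap.id ℝ (E j))
    (hPιne : ∀ j k, j ≠ k → (P j).comp (ι k) = 0)
    (hexp : ∀ x : X, HasSum (fun j => ι j (P j x)) x)
    (hnormX : ∀ x : X, ∃ s : R, HasSum (fun j => ‖P j x‖ • r j) s ∧ ‖x‖ = ‖s‖)
    (A : Set X) (hA : Bornology.IsBounded A) :
    IsRelWeaklyCompact A ↔ ∀ j, IsRelWeaklyCompact (P j '' A) := by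
  classical
  rw [IsWeaklyCompact] at hrefl
  constructor
  · -- forward direction
    intro hA' j
    haveI : T2Space (WeakSpace ℝ (E j)) := ws_t2
    have himg : IsCompact (WeakSpace.map (P j) '' closure (toWeakSpace ℝ X '' A)) :=
      (hA' : IsCompact _).image (WeakSpace.map (P j)).continuous
    have hsub : toWeakSpace ℝ (E j) '' (P j '' A) ⊆
        WeakSpace.map (P j) '' closure (toWeakSpace ℝ X '' A) := by
      rintro _ ⟨_, ⟨x, hxA, rfl⟩, rfl⟩
      exact ⟨toWeakSpace ℝ X x, subset_closure (Set.mem_image_of_mem _ hxA), rfl⟩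
    exact himg.of_isClosed_subset isClosed_closure (closure_minimal hsub himg.isClosed)
  · -- backward direction
    intro hAll
    haveI : T2Space (WeakSpace ℝ X) := ws_t2
    obtain ⟨Pi, hPin, hPir, hPilim⟩ := proj_exists hr hbasis huncond
    obtain ⟨M0, hM0⟩ := hA.exists_norm_le
    set M := max M0 1 with hMdef
    have hM1 : (1:ℝ) ≤ M := le_max_right _ _
    have hMpos : (0:ℝ) < M := lt_of_lt_of_le one_pos hM1
    have hbound : ∀ x ∈ A, ‖x‖ ≤ M := fun x hx => (hM0 x hx).trans (le_max_left _ _)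
    set C : ∀ j, Set (WeakSpace ℝ (E j)) :=
      fun j => closure (toWeakSpace ℝ (E j) '' (P j '' A)) with hC
    set K : Set X := {x | ‖x‖ ≤ M ∧ ∀ j, toWeakSpace ℝ (E j) (P j x) ∈ C j} with hK
    have hAK : A ⊆ K := fun x hx =>
      ⟨hbound x hx, fun j => subset_closure (Set.mem_image_of_mem _ (Set.mem_image_of_mem _ hx))⟩
    have hKcomp : IsCompact (toWeakSpace ℝ X '' K) := by
      rw [isCompact_iff_ultrafilter_le_nhds]
      intro V hV
      set 𝒰 : Ultrafilter X := V.map (toWeakSpace ℝ X).symm with h𝒰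
      have hVU : (Filter.map (fun x : X => toWeakSpace ℝ X x) ↑𝒰) = ↑V := by
        rw [h𝒰, Ultrafilter.coe_map, Filter.map_map]
        have : (fun x : X => toWeakSpace ℝ X x) ∘ (toWeakSpace ℝ X).symm = id := by
          funext z; simp
        rw [this, Filter.map_id]
      have hKU : K ∈ 𝒰 := by
        rw [h𝒰]
        have h1 : toWeakSpace ℝ X '' K ∈ V := Filter.le_principal_iff.mp hV
        refine Filter.mem_of_superset h1 ?_
        rintro _ ⟨x, hxK, rfl⟩
        exact hxK
      -- coordinate limits
      have hVj : ∀ j, ↑(𝒰.map (fun x => toWeakSpace ℝ (E j) (P j x))) ≤ 𝓟 (C j) := by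
        intro j
        rw [Ultrafilter.coe_map, Filter.le_principal_iff, Filter.mem_map]
        exact Filter.mem_of_superset hKU fun x hx => hx.2 j
      have hyj : ∀ j, ∃ y : E j, toWeakSpace ℝ (E j) y ∈ C j ∧
          ∀ gj : E j →L[ℝ] ℝ, Tendsto (fun x => gj (P j x)) ↑𝒰 (𝓝 (gj y)) := by
        intro j
        obtain ⟨cj, hcjC, hcjle⟩ := (hAll j).ultrafilter_le_nhds _ (hVj j)
        refine ⟨(toWeakSpace ℝ (E j)).symm cj, by simpa using hcjC, ?_⟩
        have htw : Tendsto (fun x => toWeakSpace ℝ (E j) (P j x)) ↑𝒰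
            (𝓝 (toWeakSpace ℝ (E j) ((toWeakSpace ℝ (E j)).symm cj))) := by
          simpa [Tendsto] using hcjle
        exact fun gj => ws_tendsto_iff.mp htw gj
      choose y hyC hytend using hyj
      set a : ℕ → ℝ := fun j => ‖y j‖ with ha
      -- bound on partial sums of the scalar series
      have hbnd : ∀ s : Finset ℕ, ‖∑ j ∈ s, a j • r j‖ ≤ M := by
        intro s
        refine le_of_forall_pos_le_add fun δ hδ => ?_
        set δ' := δ / (s.card + 1) with hδ'
        have hδ'pos : 0 < δ' := by positivity
        have hev : ∀ j, ∀ᶠ x in (↑𝒰 : Filter X), a j - δ' ≤ ‖P j x‖ := by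
          intro j
          by_contra hcon
          have hco : {x : X | a j - δ' ≤ ‖P j x‖}ᶜ ∈ 𝒰 :=
            (Ultrafilter.compl_mem_iff_notMem.mpr hcon)
          have hevc : ∀ᶠ x in (↑𝒰 : Filter X), ‖P j x‖ ≤ a j - δ' := by
            filter_upwards [hco] with x hx
            simp only [Set.mem_compl_iff, Set.mem_setOf_eq, not_le] at hx
            exact hx.le
          have := ws_norm_le_of_tendsto (l := (↑𝒰 : Filter X)) (hytend j) hevc
          have h2 : a j = ‖y j‖ := by rw [ha]
          linarith [this, h2.ge, h2.le]
        have hevs : ∀ᶠ x in (↑𝒰 : Filter X), ∀ j ∈ s, a j - δ' ≤ ‖P j x‖ :=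
          (eventually_all_finset s).mpr fun j _ => hev j
        have hKev0 : ∀ᶠ x in (↑𝒰 : Filter X), x ∈ K := hKU
        obtain ⟨x, hxs, hxK⟩ := (hevs.and hKev0).exists
        -- m j := max (a j - δ') 0
        set m : ℕ → ℝ := fun j => max (a j - δ') 0 with hm
        have hsplit : ∑ j ∈ s, a j • r j
            = ∑ j ∈ s, m j • r j + ∑ j ∈ s, (a j - m j) • r j := by
          rw [← Finset.sum_add_distrib]
          refine Finset.sum_congr rfl fun j _ => ?_
          rw [← add_smul]
          ring_nf
        have hterm1 : ‖∑ j ∈ s, m j • r j‖ ≤ M := by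
          obtain ⟨σx, hσx, hxn⟩ := hnormX x
          have h1 : ‖∑ j ∈ s, m j • r j‖ ≤ ‖σx‖ := by
            refine uncond_le_tsum huncond hσx m s fun j hj => ?_
            rw [abs_of_nonneg (le_max_right _ _), abs_of_nonneg (norm_nonneg _)]
            exact max_le ((hxs j hj)) (norm_nonneg _)
          rw [← hxn] at h1
          exact h1.trans hxK.1
        have hterm2 : ‖∑ j ∈ s, (a j - m j) • r j‖ ≤ δ' * s.card := by
          calc ‖∑ j ∈ s, (a j - m j) • r j‖ ≤ ∑ j ∈ s, ‖(a j - m j) • r j‖ :=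
                norm_sum_le _ _
            _ ≤ ∑ j ∈ s, δ' := by
                refine Finset.sum_le_sum fun j _ => ?_
                rw [norm_smul, hr j, mul_one, Real.norm_eq_abs]
                simp only [hm]
                have haj : 0 ≤ a j := norm_nonneg _
                rw [abs_le]
                constructor
                · rcases le_total (a j - δ') 0 with h | h
                  · rw [max_eq_right h]; linarith
                  · rw [max_eq_left h]; linarith
                · rcases le_total (a j - δ') 0 with h | h
                  · rw [max_eq_right h]; linarith
                  · rw [max_eq_left h]; linarith
            _ = δ' * s.card := by rw [Finset.sum_const, nsmul_eq_mul, mul_comm]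
        have hcard : δ' * s.card ≤ δ := by
          rw [hδ']
          rw [div_mul_eq_mul_div, div_le_iff₀ (by positivity)]
          have : (s.card : ℝ) ≤ s.card + 1 := by linarith
          nlinarith [hδ.le]
        calc ‖∑ j ∈ s, a j • r j‖
            ≤ ‖∑ j ∈ s, m j • r j‖ + ‖∑ j ∈ s, (a j - m j) • r j‖ := by
              rw [hsplit]; exact norm_add_le _ _
          _ ≤ M + δ' * s.card := add_le_add hterm1 hterm2
          _ ≤ M + δ := by linarith
      obtain ⟨v, hv, hvM⟩ := bounded_complete huncond Pi hPir hPilim hrefl a hMpos hbnd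
      -- the candidate limit
      have hsumX : Summable (fun j => ι j (y j)) := by
        rw [summable_iff_vanishing_norm]
        intro δ hδ
        have hvan := summable_iff_vanishing_norm.mp hv.summable δ hδ
        obtain ⟨s, hs⟩ := hvan
        refine ⟨s, fun t ht => ?_⟩
        have hxt : ∀ k, P k (∑ j ∈ t, ι j (y j)) = if k ∈ t then y k else 0 :=
          coord_sum hPι hPιne _ t
        have h1 : ‖∑ j ∈ t, ι j (y j)‖ = ‖∑ j ∈ t, a j • r j‖ := by
          rw [fin_support_norm hnormX _ t (fun j hj => by rw [hxt j, if_neg hj])]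
          congr 1
          refine Finset.sum_congr rfl fun j hj => ?_
          rw [hxt j, if_pos hj, ha]
        rw [h1]
        exact hs t ht
      set yy := ∑' j, ι j (y j) with hyy
      have hy : HasSum (fun j => ι j (y j)) yy := hsumX.hasSum
      have hPy : ∀ k, P k yy = y k := by
        intro k
        have h1 : HasSum (fun j => P k (ι j (y j))) (P k yy) := hy.mapL (P k)
        have h2 : HasSum (fun j => P k (ι j (y j))) (P k (ι k (y k))) := by
          refine hasSum_single k fun j hj => ?_
          have := congrArg (fun T => T (y j)) (hPιne k j (Ne.symm hj))
          simpa using this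
        have h3 := h1.unique h2
        have h4 : P k (ι k (y k)) = y k := by
          have := congrArg (fun T => T (y k)) (hPι k)
          simpa using this
        rw [h3, h4]
      have hyM : ‖yy‖ ≤ M := by
        obtain ⟨σ, hσ, hyn⟩ := hnormX yy
        have heq : (fun j => ‖P j yy‖ • r j) = fun j => a j • r j := by
          funext j; rw [hPy j, ha]
        rw [heq] at hσ
        rw [hyn, hσ.unique hv]
        exact hvM
      have hyK : yy ∈ K := by
        refine ⟨hyM, fun j => ?_⟩
        rw [hPy j]
        exact hyC j
      -- the weak convergence
      refine ⟨toWeakSpace ℝ X yy, Set.mem_image_of_mem _ hyK, ?_⟩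
      rw [← hVU]
      have htendX : Tendsto (fun x : X => toWeakSpace ℝ X x) ↑𝒰 (𝓝 (toWeakSpace ℝ X yy)) := by
        rw [ws_tendsto_iff]
        intro f
        rw [Metric.tendsto_nhds]
        intro δ hδ
        set δ' := δ / (4 * M) with hδ'
        have hδ'pos : 0 < δ' := by positivity
        obtain ⟨s, hs⟩ := shrinking hrefl hr hbasis huncond hPι hPιne hexp hnormX f hδ'pos
        have hscale : ∀ x : X, ‖x‖ ≤ M → |f x - f (∑ j ∈ s, ι j (P j x))| ≤ δ' * M := by
          intro x hx
          have hx' : ‖M⁻¹ • x‖ ≤ 1 := by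
            rw [norm_smul, norm_inv, Real.norm_eq_abs, abs_of_pos hMpos,
              inv_mul_le_iff₀ hMpos]
            linarith
          have := hs (M⁻¹ • x) hx'
          have hlin : f (M⁻¹ • x) - f (∑ j ∈ s, ι j (P j (M⁻¹ • x)))
              = M⁻¹ * (f x - f (∑ j ∈ s, ι j (P j x))) := by
            rw [map_smul, smul_eq_mul]
            have : ∀ j, ι j (P j (M⁻¹ • x)) = M⁻¹ • ι j (P j x) := by
              intro j; rw [map_smul, map_smul]
            rw [Finset.sum_congr rfl fun j _ => this j, ← Finset.smul_sum, map_smul,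
              smul_eq_mul]
            ring
          rw [hlin, abs_mul, abs_inv, abs_of_pos hMpos] at this
          calc |f x - f (∑ j ∈ s, ι j (P j x))|
              = M * (M⁻¹ * |f x - f (∑ j ∈ s, ι j (P j x))|) := by
                field_simp
            _ ≤ M * δ' := by nlinarith
            _ = δ' * M := mul_comm _ _
        have hmid : Tendsto (fun x : X => ∑ j ∈ s, f (ι j (P j x))) ↑𝒰
            (𝓝 (∑ j ∈ s, f (ι j (y j)))) :=
          tendsto_finset_sum _ fun j _ => hytend j (f.comp (ι j))
        have hmidev : ∀ᶠ x in (↑𝒰 : Filter X),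
            |∑ j ∈ s, f (ι j (P j x)) - ∑ j ∈ s, f (ι j (y j))| < δ/4 := by
          have hball := hmid (Metric.ball_mem_nhds _ (by positivity : (0:ℝ) < δ/4))
          rw [Filter.mem_map] at hball
          filter_upwards [hball] with x hx
          rw [Set.mem_preimage, Metric.mem_ball, Real.dist_eq] at hx
          exact hx
        have hKev : ∀ᶠ x in (↑𝒰 : Filter X), x ∈ K := hKU
        filter_upwards [hmidev, hKev] with x hx1 hx2
        have e1 : |f x - f (∑ j ∈ s, ι j (P j x))| ≤ δ' * M := hscale x hx2.1
        have e3 : |f yy - f (∑ j ∈ s, ι j (P j yy))| ≤ δ' * M := hscale yy hyM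
        have e2 : |∑ j ∈ s, f (ι j (P j x)) - ∑ j ∈ s, f (ι j (y j))| < δ/4 := hx1
        have hMδ : δ' * M = δ/4 := by
          rw [hδ']; field_simp
        have hfsx : f (∑ j ∈ s, ι j (P j x)) = ∑ j ∈ s, f (ι j (P j x)) := map_sum f _ _
        have hfsy : f (∑ j ∈ s, ι j (P j yy)) = ∑ j ∈ s, f (ι j (y j)) := by
          rw [map_sum]
          exact Finset.sum_congr rfl fun j _ => by rw [hPy j]
        rw [Real.dist_eq]
        have : f x - f yy = (f x - f (∑ j ∈ s, ι j (P j x)))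
            + (∑ j ∈ s, f (ι j (P j x)) - ∑ j ∈ s, f (ι j (y j)))
            - (f yy - f (∑ j ∈ s, ι j (P j yy))) := by
          rw [hfsx, hfsy]; ring
        rw [this]
        have habs := abs_sub (f x - f (∑ j ∈ s, ι j (P j x))
            + (∑ j ∈ s, f (ι j (P j x)) - ∑ j ∈ s, f (ι j (y j))))
            (f yy - f (∑ j ∈ s, ι j (P j yy)))
        calc |f x - f (∑ j ∈ s, ι j (P j x))
            + (∑ j ∈ s, f (ι j (P j x)) - ∑ j ∈ s, f (ι j (y j)))
            - (f yy - f (∑ j ∈ s, ι j (P j yy)))|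
            ≤ |f x - f (∑ j ∈ s, ι j (P j x))
              + (∑ j ∈ s, f (ι j (P j x)) - ∑ j ∈ s, f (ι j (y j)))|
              + |f yy - f (∑ j ∈ s, ι j (P j yy))| := abs_sub _ _
          _ ≤ |f x - f (∑ j ∈ s, ι j (P j x))|
              + |∑ j ∈ s, f (ι j (P j x)) - ∑ j ∈ s, f (ι j (y j))|
              + |f yy - f (∑ j ∈ s, ι j (P j yy))| := by
                have := abs_add_le (f x - f (∑ j ∈ s, ι j (P j x)))
                  (∑ j ∈ s, f (ι j (P j x)) - ∑ j ∈ s, f (ι j (y j)))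
                linarith
          _ < δ/4 + δ/4 + δ/4 := by
                rw [hMδ] at e1 e3
                have := lt_of_le_of_lt (le_refl (δ/4)) (by linarith : δ/4 < δ/4 + 1)
                -- combine
                have h' : |f x - f (∑ j ∈ s, ι j (P j x))| ≤ δ/4 := e1
                have h'' : |f yy - f (∑ j ∈ s, ι j (P j yy))| ≤ δ/4 := e3
                linarith
          _ < δ := by linarith
      exact htendX
    have hsub2 : toWeakSpace ℝ X '' A ⊆ toWeakSpace ℝ X '' K := Set.image_mono hAK
    exact hKcomp.of_isClosed_subset isClosed_closure
      (closure_minimal hsub2 hKcomp.isClosed)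
end

section
/- Let E be a Banach space with the Dunford–Pettis property. If E has the bounded weakly compact approximation property, then E has the Schur property. -/
open Filter Topology

/-- A sequence is weakly null if it tends to `0` in the weak topology. -/
def WeaklyNull {E : Type*} [NormedAddCommGroup E] [NormedSpace ℝ E] (x : ℕ → E) : Prop :=
  Tendsto (fun n => toWeakSpace ℝ E (x n)) atTop (nhds 0)

/-- `E` has the Dunford–Pettis property: weakly compact operators out of `E` map weakly
null sequences to norm-null sequences. -/
def HasDPP (E : Type) [NormedAddCommGroup E] [NormedSpace ℝ E] : Prop :=
  ∀ (F : Type) (_ : NormedAddCommGroup F), ∀ (_ : NormedSpace ℝ F) (_ : CompleteSpace F),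
    ∀ V : E →L[ℝ] F, IsWeaklyCompactOp V →
      ∀ x : ℕ → E, WeaklyNull x → Tendsto (fun n => ‖V (x n)‖) atTop (nhds 0)

/-- `E` has the Schur property: weakly null sequences are norm null. -/
def HasSchur (E : Type) [NormedAddCommGroup E] [NormedSpace ℝ E] : Prop :=
  ∀ x : ℕ → E, WeaklyNull x → Tendsto (fun n => ‖x n‖) atTop (nhds 0)

/-- If a Banach space with the Dunford–Pettis property has the bounded weakly compact
approximation property, then it has the Schur property. -/
theorem stmt_8 {E : Type} [NormedAddCommGroup E] [NormedSpace ℝ E] [CompleteSpace E]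
    (hDPP : HasDPP E) (hWAP : ∃ C : ℝ, HasWAPWith E C) :
    HasSchur E := by
  intro x hx
  rw [NormedAddCommGroup.tendsto_nhds_zero]
  intro ε hε
  obtain ⟨C, hC⟩ := hWAP
  have hDcomp : IsWeaklyCompact (insert (0 : E) (Set.range x)) := by
    have h0 : (toWeakSpace ℝ E) '' insert (0 : E) (Set.range x) =
        insert (0 : WeakSpace ℝ E) (Set.range fun n => toWeakSpace ℝ E (x n)) := by
      rw [Set.image_insert_eq, ← Set.range_comp, map_zero]
      rfl
    unfold IsWeaklyCompact
    rw [h0]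
    exact hx.isCompact_insert_range
  obtain ⟨V, hVwc, -, hVapprox⟩ := hC _ hDcomp (ε / 2) (half_pos hε)
  have hVnull := hDPP E inferInstance inferInstance inferInstance V hVwc x hx
  have h2 : ∀ᶠ n in atTop, ‖V (x n)‖ < ε / 2 :=
    hVnull.eventually_lt_const (half_pos hε)
  filter_upwards [h2] with n hn
  have h1 : ‖x n - V (x n)‖ < ε / 2 := hVapprox _ (Set.mem_insert_of_mem _ ⟨n, rfl⟩)
  calc ‖(‖x n‖)‖ = ‖x n‖ := by simp
    _ = ‖(x n - V (x n)) + V (x n)‖ := by rw [sub_add_cancel]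
    _ ≤ ‖x n - V (x n)‖ + ‖V (x n)‖ := norm_add_le _ _
    _ < ε / 2 + ε / 2 := by linarith
    _ = ε := by ring
end

section
/- (Pták's combinatorial lemma) Let 0 < δ < 1 and let 𝓕 be a collection of non-empty finite subsets of ℕ such that: (i) B ∈ 𝓕 whenever ∅ ≠ B ⊆ A and A ∈ 𝓕; (ii) for every k ∈ ℕ and every (α_1,…,α_k) with α_r ≥ 0 and ∑_r α_r = 1, there exists A ∈ 𝓕 with ∑_{j∈A} α_j ≥ δ. Then there is an infinite subset M ⊆ ℕ such that every non-empty finite subset of M belongs to 𝓕. -/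
open Finset

lemma ptak_exists_weights (δ : ℝ) (hδ0 : 0 < δ) (𝓕 : Set (Finset ℕ))
    (hdown : ∀ A ∈ 𝓕, ∀ B : Finset ℕ, B.Nonempty → B ⊆ A → B ∈ 𝓕)
    (hconv : ∀ (k : ℕ) (α : ℕ → ℝ), (∀ j, 0 ≤ α j) → (∀ j, k ≤ j → α j = 0) →
      ∑ j ∈ Finset.range k, α j = 1 → ∃ A ∈ 𝓕, δ ≤ ∑ j ∈ A, α j)
    (k : ℕ) (hk : 0 < k) :
    ∃ (t : Finset (Finset ℕ)) (w : Finset ℕ → ℝ),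
      (∀ A ∈ t, 0 ≤ w A) ∧ ∑ A ∈ t, w A = 1 ∧
      (∀ A ∈ t, A ∈ 𝓕 ∧ A ⊆ Finset.range k) ∧
      (∀ j, j < k → δ ≤ ∑ A ∈ t, (if j ∈ A then w A else 0)) := by
  classical
  have hsingle : ({0} : Finset ℕ) ∈ 𝓕 := by
    obtain ⟨A, hA, hsum⟩ := hconv 1 (fun j => if j = 0 then 1 else 0)
      (fun j => by by_cases h : j = 0 <;> simp [h]) (fun j hj => if_neg (by omega)) (by simp)
    have h0A : 0 ∈ A := by
      by_contra h
      rw [Finset.sum_ite_eq' A 0 (fun _ => (1:ℝ))] at hsum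
      simp [h] at hsum; linarith
    exact hdown A hA {0} ⟨0, Finset.mem_singleton_self 0⟩ (by simpa)
  set φ : Finset ℕ → (Fin k → ℝ) := fun A j => if (j:ℕ) ∈ A then 1 else 0 with hφ
  set S : Set (Fin k → ℝ) := φ '' {A | A ∈ 𝓕 ∧ A ⊆ Finset.range k} with hS
  have hSfin : S.Finite := by
    apply Set.Finite.image
    apply Set.Finite.subset (Finset.range k).powerset.finite_toSet
    intro A hA
    simp only [Finset.coe_powerset, Set.mem_preimage, Set.mem_powerset_iff]
    exact_mod_cast hA.2
  set T : Set (Fin k → ℝ) := {x | ∀ j, δ ≤ x j} with hT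
  by_cases hdis : Disjoint (convexHull ℝ S) T
  · -- contradiction case
    exfalso
    have hTconv : Convex ℝ T := by
      intro x hx y hy a b ha hb hab j
      have h1 : a * δ ≤ a * x j := mul_le_mul_of_nonneg_left (hx j) ha
      have h2 : b * δ ≤ b * y j := mul_le_mul_of_nonneg_left (hy j) hb
      have h3 : (a • x + b • y) j = a * x j + b * y j := rfl
      rw [h3]; nlinarith
    have hTclosed : IsClosed T := by
      have : T = ⋂ j, (fun x : Fin k → ℝ => x j) ⁻¹' Set.Ici δ := by
        ext x; simp [hT, Set.mem_iInter]
      rw [this]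
      exact isClosed_iInter fun j => (isClosed_Ici).preimage (continuous_apply j)
    obtain ⟨f, u, v, hfu, huv, hfv⟩ :=
      geometric_hahn_banach_compact_closed (convex_convexHull ℝ S)
        (hSfin.isCompact_convexHull (𝕜 := ℝ)) hTconv hTclosed hdis
    set e : Fin k → (Fin k → ℝ) := fun i j => if i = j then 1 else 0 with he
    set α : Fin k → ℝ := fun j => f (e j) with hα
    have frepr : ∀ x : Fin k → ℝ, f x = ∑ j, x j * α j := by
      intro x
      have h1 : f x = f (∑ i, x i • e i) := by
        congr 1
        rw [he]
        exact pi_eq_sum_univ x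
      rw [h1, map_sum]
      exact Finset.sum_congr rfl fun i _ => by rw [map_smul, smul_eq_mul]
    have hconstT : (fun _ : Fin k => δ) ∈ T := fun j => le_refl δ
    have hb₀ : v < f (fun _ => δ) := hfv _ hconstT
    have hfδ : f (fun _ => δ) = δ * ∑ j, α j := by
      rw [frepr, Finset.mul_sum]
    have hα0 : ∀ j, 0 ≤ α j := by
      intro j
      by_contra hneg
      push_neg at hneg
      set r := (v - f (fun _ => δ)) / α j with hr
      have hrpos : 0 < r := div_pos_of_neg_of_neg (by linarith) hneg
      have hbT : ((fun _ : Fin k => δ) + r • e j) ∈ T := by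
        intro i
        have h1 : (0:ℝ) ≤ e j i := by rw [he]; dsimp only; split <;> norm_num
        have h2 : ((fun _ : Fin k => δ) + r • e j) i = δ + r * e j i := rfl
        rw [h2]; nlinarith
      have hlt := hfv _ hbT
      rw [map_add, map_smul, smul_eq_mul, hr, div_mul_cancel₀ _ (ne_of_lt hneg)] at hlt
      linarith
    have hs0 : 0 ≤ ∑ j, α j := Finset.sum_nonneg fun j _ => hα0 j
    have hmem0 : φ {0} ∈ S := by
      refine ⟨{0}, ⟨hsingle, ?_⟩, rfl⟩
      intro x hx
      simp only [Finset.mem_singleton] at hx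
      subst hx
      exact Finset.mem_range.2 hk
    have hfu0 : f (φ {0}) < u := hfu _ (subset_convexHull ℝ S hmem0)
    rcases eq_or_lt_of_le hs0 with hs0eq | hs0pos
    · have hall : ∀ j ∈ Finset.univ, α j = 0 :=
        (Finset.sum_eq_zero_iff_of_nonneg (fun j _ => hα0 j)).1 hs0eq.symm
      have h1 : f (φ {0}) = 0 := by
        rw [frepr]
        exact Finset.sum_eq_zero fun j hj => by rw [hall j hj, mul_zero]
      rw [hfδ, ← hs0eq, mul_zero] at hb₀
      linarith
    · set s0 := ∑ j, α j with hs0def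
      set β : ℕ → ℝ := fun m => (∑ j : Fin k, if (j:ℕ) = m then α j else 0) / s0 with hβ
      have hβ0 : ∀ m, 0 ≤ β m := by
        intro m
        apply div_nonneg _ (le_of_lt hs0pos)
        refine Finset.sum_nonneg fun j _ => ?_
        split
        · exact hα0 j
        · exact le_refl 0
      have hβhigh : ∀ m, k ≤ m → β m = 0 := by
        intro m hm
        have h1 : (∑ j : Fin k, if (j:ℕ) = m then α j else 0) = 0 :=
          Finset.sum_eq_zero fun j _ => if_neg (by have := j.isLt; omega)
        rw [hβ]; dsimp only; rw [h1, zero_div]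
      have hβsum : ∑ m ∈ Finset.range k, β m = 1 := by
        rw [hβ]; dsimp only
        rw [← Finset.sum_div, Finset.sum_comm]
        have h1 : ∀ j : Fin k, (∑ m ∈ Finset.range k, if (j:ℕ) = m then α j else 0) = α j := by
          intro j
          rw [Finset.sum_ite_eq (Finset.range k) (j:ℕ) (fun _ => α j)]
          simp [Finset.mem_range, j.isLt]
        rw [Finset.sum_congr rfl fun j _ => h1 j]
        exact div_self (ne_of_gt hs0pos)
      obtain ⟨A, hA𝓕, hAs⟩ := hconv k β hβ0 hβhigh hβsum
      set A' := A ∩ Finset.range k with hA'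
      have hsub : A' ⊆ A := Finset.inter_subset_left
      have hsum' : ∑ m ∈ A', β m = ∑ m ∈ A, β m := by
        apply Finset.sum_subset hsub
        intro m hm hnot
        apply hβhigh
        by_contra h
        push_neg at h
        exact hnot (Finset.mem_inter.2 ⟨hm, Finset.mem_range.2 h⟩)
      have hA'ne : A'.Nonempty := by
        by_contra h
        rw [Finset.not_nonempty_iff_eq_empty] at h
        rw [← hsum', h, Finset.sum_empty] at hAs
        linarith
      have hA'𝓕 := hdown A hA𝓕 A' hA'ne hsub
      have hmem' : φ A' ∈ S := ⟨A', ⟨hA'𝓕, Finset.inter_subset_right⟩, rfl⟩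
      have hfuA : f (φ A') < u := hfu _ (subset_convexHull ℝ S hmem')
      have hfA : f (φ A') = ∑ j : Fin k, if (j:ℕ) ∈ A' then α j else 0 := by
        rw [frepr]
        exact Finset.sum_congr rfl fun j _ => by
          rw [hφ]; dsimp only; split <;> simp
      have hβA : ∑ m ∈ A', β m = (∑ j : Fin k, if (j:ℕ) ∈ A' then α j else 0) / s0 := by
        rw [hβ]; dsimp only
        rw [← Finset.sum_div]
        congr 1
        rw [Finset.sum_comm]
        exact Finset.sum_congr rfl fun j _ =>
          Finset.sum_ite_eq A' (j:ℕ) (fun _ => α j)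
      rw [← hsum', hβA] at hAs
      have hge : δ * s0 ≤ ∑ j : Fin k, if (j:ℕ) ∈ A' then α j else 0 :=
        (le_div_iff₀ hs0pos).1 hAs
      rw [← hfA] at hge
      rw [hfδ] at hb₀
      linarith
  · -- extraction case
    rw [Set.not_disjoint_iff] at hdis
    obtain ⟨c, hcHull, hcT⟩ := hdis
    rw [_root_.convexHull_eq] at hcHull
    obtain ⟨ι, t, w, z, hw0, hw1, hzS, hcc⟩ := hcHull
    have hcsum : ∑ i ∈ t, w i • z i = c := by
      rw [← hcc, Finset.centerMass_eq_of_sum_1 _ _ hw1]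
    have hB : ∀ i, i ∈ t → ∃ A, (A ∈ 𝓕 ∧ A ⊆ Finset.range k) ∧ φ A = z i := by
      intro i hi
      obtain ⟨A, hA, hAe⟩ := hzS i hi
      exact ⟨A, hA, hAe⟩
    set B : ι → Finset ℕ := fun i =>
      if h : ∃ A, (A ∈ 𝓕 ∧ A ⊆ Finset.range k) ∧ φ A = z i then h.choose else ∅ with hBdef
    have hBspec : ∀ i ∈ t, (B i ∈ 𝓕 ∧ B i ⊆ Finset.range k) ∧ φ (B i) = z i := by
      intro i hi
      have h := hB i hi
      rw [hBdef]; dsimp only; rw [dif_pos h]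
      exact h.choose_spec
    refine ⟨t.image B, fun A => ∑ i ∈ t.filter (fun i => B i = A), w i, ?_, ?_, ?_, ?_⟩
    · intro A _
      exact Finset.sum_nonneg fun i hi => hw0 i (Finset.mem_filter.1 hi).1
    · exact (Finset.sum_image' (g := B)
        (f := fun A => ∑ i ∈ t.filter (fun i => B i = A), w i) w (fun i _ => rfl)).trans hw1
    · intro A hA
      obtain ⟨i, hi, rfl⟩ := Finset.mem_image.1 hA
      exact (hBspec i hi).1
    · intro j hj
      have himg : ∑ A ∈ t.image B,
            (if j ∈ A then (∑ i ∈ t.filter (fun i => B i = A), w i) else 0)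
          = ∑ i ∈ t, (if j ∈ B i then w i else 0) := by
        apply Finset.sum_image'
        intro i _
        by_cases h : j ∈ B i
        · rw [if_pos h]
          exact Finset.sum_congr rfl fun x hx => by
            rw [(Finset.mem_filter.1 hx).2, if_pos h]
        · rw [if_neg h]
          symm
          exact Finset.sum_eq_zero fun x hx => by
            rw [(Finset.mem_filter.1 hx).2, if_neg h]
      rw [himg]
      have hc : δ ≤ c ⟨j, hj⟩ := hcT ⟨j, hj⟩
      rw [← hcsum, Finset.sum_apply] at hc
      have heq : ∑ i ∈ t, (w i • z i) ⟨j, hj⟩ = ∑ i ∈ t, (if j ∈ B i then w i else 0) := by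
        apply Finset.sum_congr rfl
        intro i hi
        have hz : z i = φ (B i) := ((hBspec i hi).2).symm
        rw [Pi.smul_apply, smul_eq_mul, hz, hφ]
        dsimp only
        split <;> simp
      rw [heq] at hc
      exact hc


open Finset MeasureTheory Filter
open scoped ENNReal

/-- cylinder sets: determined by finitely many coordinates -/
def ptakCyl (S : Set (ℕ → Bool)) : Prop :=
  ∃ n : ℕ, ∀ x y : ℕ → Bool, (∀ i, i < n → x i = y i) → (x ∈ S ↔ y ∈ S)

lemma ptakCyl_empty : ptakCyl ∅ := ⟨0, fun _ _ _ => Iff.rfl⟩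

lemma ptakCyl_univ : ptakCyl Set.univ := ⟨0, fun _ _ _ => Iff.rfl⟩

lemma ptakCyl_compl {S : Set (ℕ → Bool)} (h : ptakCyl S) : ptakCyl Sᶜ := by
  obtain ⟨n, hn⟩ := h
  exact ⟨n, fun x y hxy => by simp [Set.mem_compl_iff, hn x y hxy]⟩

lemma ptakCyl_inter {S T : Set (ℕ → Bool)} (hS : ptakCyl S) (hT : ptakCyl T) :
    ptakCyl (S ∩ T) := by
  obtain ⟨n, hn⟩ := hS
  obtain ⟨m, hm⟩ := hT
  refine ⟨max n m, fun x y hxy => ?_⟩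
  have h1 := hn x y fun i hi => hxy i (lt_of_lt_of_le hi (le_max_left n m))
  have h2 := hm x y fun i hi => hxy i (lt_of_lt_of_le hi (le_max_right n m))
  simp [Set.mem_inter_iff, h1, h2]

lemma ptakCyl_diff {S T : Set (ℕ → Bool)} (hS : ptakCyl S) (hT : ptakCyl T) :
    ptakCyl (S \ T) := ptakCyl_inter hS (ptakCyl_compl hT)

lemma ptakCyl_isOpen {S : Set (ℕ → Bool)} (h : ptakCyl S) : IsOpen S := by
  obtain ⟨n, hn⟩ := h
  have hrw : S = ⋃ (x ∈ S), ⋂ i ∈ Finset.range n, {y : ℕ → Bool | y i = x i} := by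
    ext z
    constructor
    · intro hz
      exact Set.mem_biUnion hz (by simp)
    · intro hz
      rw [Set.mem_iUnion₂] at hz
      obtain ⟨x, hx, hz⟩ := hz
      simp only [Set.mem_iInter, Finset.mem_range, Set.mem_setOf_eq] at hz
      exact (hn x z fun i hi => (hz i hi).symm).1 hx
  rw [hrw]
  refine isOpen_biUnion fun x _ => isOpen_biInter_finset fun i _ => ?_
  have : {y : ℕ → Bool | y i = x i} = (fun y : ℕ → Bool => y i) ⁻¹' {x i} := rfl
  rw [this]
  exact (continuous_apply i).isOpen_preimage _ (isOpen_discrete _)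

lemma ptakCyl_isCompact {S : Set (ℕ → Bool)} (h : ptakCyl S) : IsCompact S :=
  (isOpen_compl_iff.1 (ptakCyl_isOpen (ptakCyl_compl h))).isCompact

lemma ptakCyl_measurableSet {S : Set (ℕ → Bool)} (h : ptakCyl S) : MeasurableSet S := by
  classical
  obtain ⟨n, hn⟩ := h
  have hrw : S = ⋃ (s : Fin n → Bool)
      (_ : (fun i => if h : i < n then s ⟨i, h⟩ else false) ∈ S),
      ⋂ i : Fin n, {x : ℕ → Bool | x i = s i} := by
    ext x
    constructor
    · intro hx
      refine Set.mem_iUnion.2 ⟨fun i => x i, Set.mem_iUnion.2 ⟨?_, ?_⟩⟩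
      · exact (hn x _ fun i hi => by simp [hi]).1 hx
      · simp
    · intro hx
      rw [Set.mem_iUnion] at hx
      obtain ⟨s, hx⟩ := hx
      rw [Set.mem_iUnion] at hx
      obtain ⟨hs, hx⟩ := hx
      simp only [Set.mem_iInter, Set.mem_setOf_eq] at hx
      refine (hn _ x fun i hi => ?_).1 hs
      simp only [hi, dif_pos]
      exact (hx ⟨i, hi⟩).symm
  rw [hrw]
  refine MeasurableSet.iUnion fun s => MeasurableSet.iUnion fun _ =>
    MeasurableSet.iInter fun i => ?_
  have hm : Measurable (fun x : ℕ → Bool => x (i : ℕ)) := measurable_pi_apply _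
  exact hm (measurableSet_singleton (s i))

lemma ptak_main (δ : ℝ) (hδ0 : 0 < δ)
    (t : ℕ → Finset (Finset ℕ)) (w : ℕ → Finset ℕ → ℝ)
    (hw0 : ∀ k, ∀ A ∈ t k, 0 ≤ w k A)
    (hw1 : ∀ k, ∑ A ∈ t k, w k A = 1)
    (hcov : ∀ k j, j ≤ k → δ ≤ ∑ A ∈ t k, (if j ∈ A then w k A else 0)) :
    ∃ M : Set ℕ, M.Infinite ∧ ∀ F : Finset ℕ, F.Nonempty → ↑F ⊆ M →
      ∃ k, ∃ A ∈ t k, F ⊆ A := by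
  classical
  set X := ℕ → Bool
  set pt : Finset ℕ → X := fun A i => decide (i ∈ A) with hpt
  set Λ : ℕ → Set X → ℝ := fun k S => ∑ A ∈ t k, (if pt A ∈ S then w k A else 0) with hΛ
  have hΛ0 : ∀ k S, 0 ≤ Λ k S := fun k S =>
    Finset.sum_nonneg fun A hA => by
      split
      · exact hw0 k A hA
      · exact le_refl 0
  have hΛ1 : ∀ k S, Λ k S ≤ 1 := by
    intro k S
    rw [hΛ]; dsimp only
    rw [← hw1 k]
    refine Finset.sum_le_sum fun A hA => ?_
    split
    · exact le_refl _
    · exact hw0 k A hA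
  have hΛmono : ∀ k {S T}, S ⊆ T → Λ k S ≤ Λ k T := by
    intro k S T hST
    refine Finset.sum_le_sum fun A hA => ?_
    by_cases h : pt A ∈ S
    · rw [if_pos h, if_pos (hST h)]
    · rw [if_neg h]
      split
      · exact hw0 k A hA
      · exact le_refl 0
  have hΛadd : ∀ k {S T}, Disjoint S T → Λ k (S ∪ T) = Λ k S + Λ k T := by
    intro k S T hST
    rw [hΛ]; dsimp only
    rw [← Finset.sum_add_distrib]
    refine Finset.sum_congr rfl fun A _ => ?_
    by_cases hS : pt A ∈ S
    · have hT : pt A ∉ T := fun hT => Set.disjoint_left.1 hST hS hT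
      rw [if_pos (Set.mem_union_left _ hS), if_pos hS, if_neg hT, add_zero]
    · by_cases hT : pt A ∈ T
      · rw [if_pos (Set.mem_union_right _ hT), if_neg hS, if_pos hT, zero_add]
      · rw [if_neg (fun h => h.elim hS hT), if_neg hS, if_neg hT, add_zero]
  have hΛunion : ∀ k S T, Λ k (S ∪ T) ≤ Λ k S + Λ k T := by
    intro k S T
    have h1 : Λ k (S ∪ T) = Λ k (S ∪ (T \ S)) := by rw [Set.union_diff_self]
    rw [h1, hΛadd k Set.disjoint_sdiff_right]
    exact add_le_add_right (hΛmono k Set.diff_subset) _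
  have hΛuniv : ∀ k, Λ k Set.univ = 1 := by
    intro k
    rw [hΛ]; dsimp only
    rw [← hw1 k]
    exact Finset.sum_congr rfl fun A _ => if_pos (Set.mem_univ _)
  have hΛempty : ∀ k, Λ k ∅ = 0 :=
    fun k => Finset.sum_eq_zero fun A _ => if_neg (Set.notMem_empty _)
  -- the distinguished events
  set E : ℕ → Set X := fun j => {x : X | x j = true} with hE
  have hEcyl : ∀ j, ptakCyl (E j) := by
    intro j
    exact ⟨j + 1, fun x y hxy => by
      show x j = true ↔ y j = true
      rw [hxy j (Nat.lt_succ_self j)]⟩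
  have hΛE : ∀ j k, j ≤ k → δ ≤ Λ k (E j) := by
    intro j k hjk
    refine le_trans (hcov k j hjk) (le_of_eq (Finset.sum_congr rfl fun A _ => ?_))
    by_cases h : j ∈ A
    · rw [if_pos h, if_pos (by simp [hE, hpt, h])]
    · rw [if_neg h, if_neg (by simp [hE, hpt, h])]
  -- ultrafilter limit
  set U : Ultrafilter ℕ := Ultrafilter.of Filter.atTop with hU
  have hUle : (U : Filter ℕ) ≤ Filter.atTop := Ultrafilter.of_le _
  have hρex : ∀ S : Set X, ∃ r : ℝ, Filter.Tendsto (fun k => Λ k S) U (nhds r) := by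
    intro S
    have hmem : (U.map (fun k => Λ k S) : Filter ℝ) ≤ Filter.principal (Set.Icc 0 1) := by
      rw [Filter.le_principal_iff]
      exact Filter.mem_map.2 (Filter.univ_mem' fun k => ⟨hΛ0 k S, hΛ1 k S⟩)
    obtain ⟨r, _, hr⟩ := (isCompact_Icc (a := (0:ℝ)) (b := 1)).ultrafilter_le_nhds
      (U.map (fun k => Λ k S)) hmem
    exact ⟨r, hr⟩
  choose ρ hρ using hρex
  have hρmono : ∀ {S T}, S ⊆ T → ρ S ≤ ρ T := fun {S T} h =>
    le_of_tendsto_of_tendsto' (hρ S) (hρ T) fun k => hΛmono k h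
  have hρ0 : ∀ S, 0 ≤ ρ S := fun S =>
    ge_of_tendsto' (hρ S) (fun k => hΛ0 k S)
  have hρadd : ∀ {S T}, Disjoint S T → ρ (S ∪ T) = ρ S + ρ T := by
    intro S T hST
    refine tendsto_nhds_unique (hρ (S ∪ T)) ?_
    have : (fun k => Λ k (S ∪ T)) = fun k => Λ k S + Λ k T :=
      funext fun k => hΛadd k hST
    rw [this]
    exact (hρ S).add (hρ T)
  have hρunion : ∀ S T, ρ (S ∪ T) ≤ ρ S + ρ T := by
    intro S T
    refine le_of_tendsto_of_tendsto' (hρ (S ∪ T)) ((hρ S).add (hρ T)) fun k => hΛunion k S T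
  have hρuniv : ρ Set.univ = 1 := by
    refine tendsto_nhds_unique (hρ Set.univ) ?_
    have : (fun k => Λ k Set.univ) = fun _ => (1:ℝ) := funext hΛuniv
    rw [this]; exact tendsto_const_nhds
  have hρempty : ρ ∅ = 0 := by
    refine tendsto_nhds_unique (hρ ∅) ?_
    have : (fun k => Λ k ∅) = fun _ => (0:ℝ) := funext hΛempty
    rw [this]; exact tendsto_const_nhds
  have hρE : ∀ j, δ ≤ ρ (E j) := by
    intro j
    refine ge_of_tendsto (hρ (E j)) ?_
    have hev : ∀ᶠ k in Filter.atTop, δ ≤ Λ k (E j) :=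
      Filter.eventually_atTop.2 ⟨j, fun k hk => hΛE j k hk⟩
    exact hev.filter_mono hUle
  -- outer measure from ultrafilter-limit content on cylinders
  set ρ' : Set X → ℝ≥0∞ := fun S => if ptakCyl S then ENNReal.ofReal (ρ S) else ⊤ with hρ'
  have hρ'empty : ρ' ∅ = 0 := by
    rw [hρ']; dsimp only; rw [if_pos ptakCyl_empty, hρempty, ENNReal.ofReal_zero]
  set μ0 : OuterMeasure X := OuterMeasure.ofFunction ρ' hρ'empty with hμ0
  have hfinsub : ∀ (I : Finset ℕ) (g : ℕ → Set X), ρ (⋃ i ∈ I, g i) ≤ ∑ i ∈ I, ρ (g i) := by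
    intro I
    induction I using Finset.induction_on with
    | empty => intro g; simp [hρempty]
    | @insert a I ha ih =>
      intro g
      rw [Finset.set_biUnion_insert, Finset.sum_insert ha]
      exact le_trans (hρunion _ _) (add_le_add_right (ih g) _)
  have hval : ∀ S, ptakCyl S → μ0 S = ENNReal.ofReal (ρ S) := by
    intro S hS
    refine le_antisymm (le_trans (OuterMeasure.ofFunction_le S) (le_of_eq (if_pos hS))) ?_
    rw [hμ0, OuterMeasure.ofFunction_apply]
    refine le_iInf fun g => le_iInf fun hg => ?_
    by_cases hall : ∀ i, ptakCyl (g i)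
    · obtain ⟨I, hI⟩ := (ptakCyl_isCompact hS).elim_finite_subcover g
        (fun i => ptakCyl_isOpen (hall i)) hg
      calc ENNReal.ofReal (ρ S) ≤ ENNReal.ofReal (∑ i ∈ I, ρ (g i)) :=
            ENNReal.ofReal_le_ofReal (le_trans (hρmono hI) (hfinsub I g))
        _ = ∑ i ∈ I, ENNReal.ofReal (ρ (g i)) :=
            ENNReal.ofReal_sum_of_nonneg (fun i _ => hρ0 _)
        _ = ∑ i ∈ I, ρ' (g i) := Finset.sum_congr rfl fun i _ => (if_pos (hall i)).symm
        _ ≤ ∑' i, ρ' (g i) := ENNReal.sum_le_tsum I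
    · push_neg at hall
      obtain ⟨i, hi⟩ := hall
      have htop : ρ' (g i) = ⊤ := if_neg hi
      rw [ENNReal.tsum_eq_top_of_eq_top ⟨i, htop⟩]
      exact le_top
  have hcara : ∀ S, ptakCyl S → μ0.caratheodory.MeasurableSet' S := by
    intro S hS
    refine OuterMeasure.ofFunction_caratheodory fun T => ?_
    by_cases hT : ptakCyl T
    · have h1 : ρ' (T ∩ S) = ENNReal.ofReal (ρ (T ∩ S)) := if_pos (ptakCyl_inter hT hS)
      have h2 : ρ' (T \ S) = ENNReal.ofReal (ρ (T \ S)) := if_pos (ptakCyl_diff hT hS)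
      have h3 : ρ' T = ENNReal.ofReal (ρ T) := if_pos hT
      rw [h1, h2, h3, ← ENNReal.ofReal_add (hρ0 _) (hρ0 _)]
      apply ENNReal.ofReal_le_ofReal
      have hdisj : Disjoint (T ∩ S) (T \ S) :=
        Set.disjoint_left.2 fun x hx1 hx2 => hx2.2 hx1.2
      have hun : (T ∩ S) ∪ (T \ S) = T := Set.inter_union_diff T S
      rw [← hρadd hdisj, hun]
    · have h4 : ρ' T = ⊤ := if_neg hT
      rw [h4]
      exact le_top
  have hle : (inferInstance : MeasurableSpace X) ≤ μ0.caratheodory := by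
    have hpi : (inferInstance : MeasurableSpace X)
        = ⨆ j : ℕ, MeasurableSpace.comap (fun x : X => x j) ⊤ := rfl
    rw [hpi]
    refine iSup_le fun j => ?_
    intro s hs
    obtain ⟨s', _, rfl⟩ := hs
    apply hcara
    exact ⟨j+1, fun x y hxy => by
      simp only [Set.mem_preimage, hxy j (Nat.lt_succ_self j)]⟩
  set μ : Measure X := μ0.toMeasure hle with hμ
  have hμval : ∀ S : Set X, MeasurableSet S → μ S = μ0 S := fun S hS =>
    MeasureTheory.toMeasure_apply μ0 hle hS
  have hμcyl : ∀ S, ptakCyl S → μ S = ENNReal.ofReal (ρ S) := fun S hS => by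
    rw [hμval S (ptakCyl_measurableSet hS), hval S hS]
  have hμuniv : μ Set.univ = 1 := by rw [hμcyl _ ptakCyl_univ, hρuniv, ENNReal.ofReal_one]
  have hfinite : IsFiniteMeasure μ := ⟨by rw [hμuniv]; exact ENNReal.one_lt_top⟩
  have hEmeas : ∀ j, MeasurableSet (E j) := fun j => ptakCyl_measurableSet (hEcyl j)
  have hμE : ∀ j, ENNReal.ofReal δ ≤ μ (E j) := fun j => by
    rw [hμcyl _ (hEcyl j)]; exact ENNReal.ofReal_le_ofReal (hρE j)
  set UU : ℕ → Set X := fun N => ⋃ (j) (_ : N ≤ j), E j with hUU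
  have hUUmeas : ∀ N, MeasurableSet (UU N) :=
    fun N => MeasurableSet.biUnion (Set.to_countable _) fun j _ => hEmeas j
  have hUUanti : Antitone UU := by
    intro N M hNM x hx
    simp only [hUU, Set.mem_iUnion] at hx ⊢
    obtain ⟨j, hj, hxj⟩ := hx
    exact ⟨j, le_trans hNM hj, hxj⟩
  have hμUU : ∀ N, ENNReal.ofReal δ ≤ μ (UU N) := fun N =>
    le_trans (hμE N) (measure_mono (Set.subset_biUnion_of_mem (le_refl N)))
  set L : Set X := ⋂ N, UU N with hL
  have hLmeas : MeasurableSet L := MeasurableSet.iInter fun N => hUUmeas N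
  have hμL : ENNReal.ofReal δ ≤ μ L := by
    have htend := tendsto_measure_iInter_atTop (μ := μ)
      (fun N => (hUUmeas N).nullMeasurableSet) hUUanti ⟨0, measure_ne_top μ _⟩
    exact ge_of_tendsto' htend fun N => hμUU N
  have hδpos : (0:ℝ≥0∞) < ENNReal.ofReal δ := ENNReal.ofReal_pos.2 hδ0
  have hstep : ∀ G : Set X, MeasurableSet G → G ⊆ L → 0 < μ G →
      ∀ N, ∃ j, N ≤ j ∧ 0 < μ (G ∩ E j) := by
    intro G hGm hGL hGpos N
    by_contra hcon
    push_neg at hcon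
    have hz : ∀ j : ℕ, μ (G ∩ E (N + j)) = 0 := fun j =>
      le_antisymm (hcon (N + j) (Nat.le_add_right N j)) zero_le
    have hsub : G ⊆ ⋃ j, (G ∩ E (N + j)) := by
      intro x hx
      have hxL : x ∈ UU N := Set.mem_iInter.1 (hGL hx) N
      simp only [hUU, Set.mem_iUnion] at hxL
      obtain ⟨j, hj, hxj⟩ := hxL
      exact Set.mem_iUnion.2 ⟨j - N, ⟨hx, by rwa [Nat.add_sub_cancel' hj]⟩⟩
    have hzero := measure_mono_null hsub (measure_iUnion_null hz)
    rw [hzero] at hGpos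
    exact lt_irrefl 0 hGpos
  -- recursive construction
  set Inv : Set X × ℕ → Prop := fun p => MeasurableSet p.1 ∧ p.1 ⊆ L ∧ 0 < μ p.1 with hInv
  set pick : Set X × ℕ → ℕ := fun p =>
    if h : Inv p then (hstep p.1 h.1 h.2.1 h.2.2 p.2).choose else 0 with hpick
  set nxt : Set X × ℕ → Set X × ℕ := fun p => (p.1 ∩ E (pick p), pick p + 1) with hnxt
  set seq : ℕ → Set X × ℕ := fun n => nxt^[n] (L, 0) with hseq
  have hseqS : ∀ n, seq (n+1) = nxt (seq n) := fun n => Function.iterate_succ_apply' nxt n _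
  have hkey : ∀ p, Inv p → (Inv (nxt p) ∧ p.2 ≤ pick p ∧ 0 < μ (p.1 ∩ E (pick p))) := by
    intro p hp
    have hpickeq : pick p = (hstep p.1 hp.1 hp.2.1 hp.2.2 p.2).choose := dif_pos hp
    obtain ⟨hj1, hj2⟩ := (hstep p.1 hp.1 hp.2.1 hp.2.2 p.2).choose_spec
    rw [← hpickeq] at hj1 hj2
    refine ⟨⟨hp.1.inter (hEmeas _), ?_, hj2⟩, hj1, hj2⟩
    exact subset_trans Set.inter_subset_left hp.2.1
  have hInvAll : ∀ n, Inv (seq n) := by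
    intro n
    induction n with
    | zero => exact ⟨hLmeas, subset_rfl, lt_of_lt_of_le hδpos hμL⟩
    | succ n ih => rw [hseqS n]; exact (hkey _ ih).1
  set jj : ℕ → ℕ := fun n => pick (seq n) with hjj
  have hsnd : ∀ n, (seq (n+1)).2 = jj n + 1 := fun n => by rw [hseqS n]
  have hmono : ∀ n, jj n < jj (n+1) := by
    intro n
    have h1 : (seq (n+1)).2 ≤ jj (n+1) := (hkey _ (hInvAll (n+1))).2.1
    rw [hsnd n] at h1
    omega
  have hjjmono : StrictMono jj := strictMono_nat_of_lt_succ hmono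
  have hfst : ∀ n, (seq (n+1)).1 = (seq n).1 ∩ E (jj n) := fun n => by rw [hseqS n]
  have hchain : ∀ n m, n ≤ m → (seq m).1 ⊆ (seq n).1 := by
    intro n m h
    induction m with
    | zero =>
      have h0 : n = 0 := Nat.le_zero.1 h
      subst h0; exact subset_rfl
    | succ m ih =>
      rcases Nat.eq_or_lt_of_le h with rfl | hlt
      · exact subset_rfl
      · refine subset_trans ?_ (ih (Nat.lt_succ_iff.1 hlt))
        rw [hfst m]
        exact Set.inter_subset_left
  have hinE : ∀ n m, n < m → (seq m).1 ⊆ E (jj n) := by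
    intro n m h
    refine subset_trans (hchain (n+1) m h) ?_
    rw [hfst n]
    exact Set.inter_subset_right
  refine ⟨Set.range jj, Set.infinite_range_of_injective hjjmono.injective, ?_⟩
  intro F hFne hFM
  set g : ℕ → ℕ := fun a => if h : ∃ n, jj n = a then h.choose else 0 with hg
  set T := F.sup g + 1 with hT
  have hFsub : ∀ a ∈ F, (seq T).1 ⊆ E a := by
    intro a ha
    have haM : ∃ n, jj n = a := hFM (Finset.mem_coe.2 ha)
    have hga : jj (g a) = a := by
      rw [hg]; dsimp only; rw [dif_pos haM]; exact haM.choose_spec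
    have hlt : g a < T := by rw [hT]; exact Nat.lt_succ_of_le (Finset.le_sup ha)
    rw [← hga]
    exact hinE (g a) T hlt
  set C : Set X := {x : X | ∀ a ∈ F, x a = true} with hC
  have hsubC : (seq T).1 ⊆ C := fun x hx a ha => hFsub a ha hx
  have hCcyl : ptakCyl C := by
    refine ⟨F.sup id + 1, fun x y hxy => ?_⟩
    have hag : ∀ a ∈ F, x a = y a := fun a ha =>
      hxy a (Nat.lt_succ_of_le (Finset.le_sup (f := id) ha))
    constructor <;> intro h a ha
    · rw [← hag a ha]; exact h a ha
    · rw [hag a ha]; exact h a ha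
  have hμC : 0 < μ C := lt_of_lt_of_le (hInvAll T).2.2 (measure_mono hsubC)
  rw [hμcyl _ hCcyl] at hμC
  have hρC : 0 < ρ C := by
    by_contra h
    push_neg at h
    rw [ENNReal.ofReal_eq_zero.2 h] at hμC
    exact lt_irrefl 0 hμC
  have hΛex : ∃ k, Λ k C ≠ 0 := by
    by_contra h
    push_neg at h
    have hfun : (fun k => Λ k C) = fun _ => (0:ℝ) := funext h
    have h0 := tendsto_nhds_unique (hρ C) (by rw [hfun]; exact tendsto_const_nhds)
    rw [h0] at hρC
    exact lt_irrefl 0 hρC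
  obtain ⟨k, hk⟩ := hΛex
  obtain ⟨A, hA, hAne⟩ := Finset.exists_ne_zero_of_sum_ne_zero hk
  have hptA : pt A ∈ C := by
    by_contra h
    rw [if_neg h] at hAne
    exact hAne rfl
  refine ⟨k, A, hA, fun a ha => ?_⟩
  have hh := hptA a ha
  exact of_decide_eq_true hh

/-- Pták's combinatorial lemma.  Let `0 < δ < 1` and let `𝓕` be a collection of non-empty
finite subsets of `ℕ` that is downward closed under non-empty subsets and such that for
every `k` and every convex combination `(α_0, …, α_{k-1})` there is `A ∈ 𝓕` with
`∑_{j ∈ A} α_j ≥ δ`.  Then there is an infinite `M ⊆ ℕ` all of whose non-empty finite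
subsets belong to `𝓕`. -/
theorem stmt_11 (δ : ℝ) (hδ0 : 0 < δ) (hδ1 : δ < 1)
    (𝓕 : Set (Finset ℕ))
    (hne : ∀ A ∈ 𝓕, A.Nonempty)
    (hdown : ∀ A ∈ 𝓕, ∀ B : Finset ℕ, B.Nonempty → B ⊆ A → B ∈ 𝓕)
    (hconv : ∀ (k : ℕ) (α : ℕ → ℝ), (∀ j, 0 ≤ α j) → (∀ j, k ≤ j → α j = 0) →
      ∑ j ∈ Finset.range k, α j = 1 → ∃ A ∈ 𝓕, δ ≤ ∑ j ∈ A, α j) :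
    ∃ M : Set ℕ, M.Infinite ∧ ∀ A : Finset ℕ, A.Nonempty → ↑A ⊆ M → A ∈ 𝓕 := by
  have hW : ∀ k : ℕ, ∃ (t : Finset (Finset ℕ)) (w : Finset ℕ → ℝ),
      (∀ A ∈ t, 0 ≤ w A) ∧ ∑ A ∈ t, w A = 1 ∧
      (∀ A ∈ t, A ∈ 𝓕 ∧ A ⊆ Finset.range (k+1)) ∧
      (∀ j, j < k+1 → δ ≤ ∑ A ∈ t, (if j ∈ A then w A else 0)) :=
    fun k => ptak_exists_weights δ hδ0 𝓕 hdown hconv (k+1) (Nat.succ_pos k)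
  choose t w h1 h2 h3 h4 using hW
  obtain ⟨M, hMinf, hM⟩ := ptak_main δ hδ0 t w h1 h2
    (fun k j hjk => h4 k j (Nat.lt_succ_of_le hjk))
  refine ⟨M, hMinf, fun A hAne hAM => ?_⟩
  obtain ⟨k, B, hB, hAB⟩ := hM A hAne hAM
  exact hdown B (h3 k B hB).1 A hAne hAB
end

section
/- Let x* ∈ B_{J*} have the w*-representation x* = w*-∑_j a_j f_j* with respect to the summing basis (f_n) of James' space J. There is a uniform constant C < ∞ such that: if ε > 0 and there are indices p_1 < q_1 < p_2 < q_2 < … < p_k < q_k with |a_{p_i} − a_{q_i}| > ε for i = 1,…,k, then k ≤ C/ε². In particular lim_j a_j exists. -/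
open Filter Topology


theorem chain_le (f g : ℕ → ℕ) (m : ℕ) (h1 : ∀ i < m, f i < g i)
    (h2 : ∀ i, i + 1 < m → g i ≤ f (i + 1)) :
    ∀ i j, i < j → j < m → g i ≤ f j := by
  intro i j
  induction j with
  | zero => omega
  | succ n ih =>
    intro hij hjm
    have h2' := h2 n hjm
    rcases Nat.lt_succ_iff_lt_or_eq.mp hij with h | h
    · exact le_trans (ih h (by omega)) (le_trans (le_of_lt (h1 n (by omega))) h2')
    · subst h; exact h2'

theorem prefix_bound (k : ℕ) (p q : ℕ → ℕ) (θ : ℕ → ℝ)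
    (hpq : ∀ i < k, p i < q i) (hqp : ∀ i, i + 1 < k → q i < p (i + 1))
    (hθ : ∀ i, |θ i| = 1) (n : ℕ) :
    |∑ j ∈ Finset.range k, θ j * ((if p j ∈ Finset.range n then (1:ℝ) else 0)
      - (if q j ∈ Finset.range n then 1 else 0))| ≤ 1 := by
  set F := (Finset.range k).filter (fun j => p j < n ∧ n ≤ q j) with hF
  have hsum : ∑ j ∈ Finset.range k, θ j * ((if p j ∈ Finset.range n then (1:ℝ) else 0)
      - (if q j ∈ Finset.range n then 1 else 0)) = ∑ j ∈ F, θ j := by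
    rw [hF, Finset.sum_filter]
    apply Finset.sum_congr rfl
    intro j hj
    simp only [Finset.mem_range] at hj
    have := hpq j hj
    by_cases h1 : p j < n
    · by_cases h2 : n ≤ q j
      · simp [Finset.mem_range, h1, h2, not_lt.mpr h2]
      · have h2' : q j < n := by omega
        simp [Finset.mem_range, h1, h2, h2']
    · have h1' : ¬ q j < n := by omega
      simp [Finset.mem_range, h1, h1']
  rw [hsum]
  have hcard : F.card ≤ 1 := by
    apply Finset.card_le_one.mpr
    intro i hi j hj
    simp only [hF, Finset.mem_filter, Finset.mem_range] at hi hj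
    by_contra hne
    have key : ∀ a b, a < b → b < k → p a < n → n ≤ q a → p b < n → False := by
      intro a b hab hbk _ hqa hpb
      have := chain_le p q k hpq (fun i h => le_of_lt (hqp i h)) a b hab hbk
      omega
    rcases Nat.lt_or_ge i j with h | h
    · exact key i j h hj.1 hi.2.1 hi.2.2 hj.2.1
    · exact key j i (by omega) hi.1 hj.2.1 hj.2.2 hi.2.1
  calc |∑ j ∈ F, θ j| ≤ ∑ j ∈ F, |θ j| := Finset.abs_sum_le_sum_abs _ _
    _ = ∑ j ∈ F, (1:ℝ) := Finset.sum_congr rfl (fun j _ => hθ j)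
    _ = F.card := by simp
    _ ≤ 1 := by exact_mod_cast hcard

theorem interval_apply (k : ℕ) (p q : ℕ → ℕ) (θ : ℕ → ℝ) (I : Finset ℕ) :
    ∑ s ∈ I, ((∑ j ∈ Finset.range k, θ j • (Finsupp.single (p j) (1:ℝ) - Finsupp.single (q j) 1)) : ℕ →₀ ℝ) s
    = ∑ j ∈ Finset.range k, θ j * ((if p j ∈ I then (1:ℝ) else 0) - (if q j ∈ I then 1 else 0)) := by
  have h1 : ∀ s, ((∑ j ∈ Finset.range k, θ j • (Finsupp.single (p j) (1:ℝ) - Finsupp.single (q j) 1)) : ℕ →₀ ℝ) s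
      = ∑ j ∈ Finset.range k, θ j * ((if p j = s then (1:ℝ) else 0) - (if q j = s then 1 else 0)) := by
    intro s
    rw [Finsupp.finset_sum_apply]
    apply Finset.sum_congr rfl
    intro j _
    simp [Finsupp.single_apply, smul_eq_mul]
  calc ∑ s ∈ I, ((∑ j ∈ Finset.range k, θ j • (Finsupp.single (p j) (1:ℝ) - Finsupp.single (q j) 1)) : ℕ →₀ ℝ) s
      = ∑ s ∈ I, ∑ j ∈ Finset.range k, θ j * ((if p j = s then (1:ℝ) else 0) - (if q j = s then 1 else 0)) :=
        Finset.sum_congr rfl (fun s _ => h1 s)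
    _ = ∑ j ∈ Finset.range k, ∑ s ∈ I, θ j * ((if p j = s then (1:ℝ) else 0) - (if q j = s then 1 else 0)) :=
        Finset.sum_comm
    _ = ∑ j ∈ Finset.range k, θ j * ((if p j ∈ I then (1:ℝ) else 0) - (if q j ∈ I then 1 else 0)) := by
        apply Finset.sum_congr rfl
        intro j _
        rw [← Finset.mul_sum, Finset.sum_sub_distrib, Finset.sum_ite_eq, Finset.sum_ite_eq]

theorem ind_sum_le_one (u v : ℕ → ℕ) (m : ℕ) (h1 : ∀ i < m, u i < v i)
    (h2 : ∀ i, i + 1 < m → v i ≤ u (i + 1)) (x : ℕ) :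
    ∑ i ∈ Finset.range m, (if x ∈ Finset.Ico (u i) (v i) then (1:ℝ) else 0) ≤ 1 := by
  rw [Finset.sum_boole]
  have hcard : ((Finset.range m).filter (fun i => x ∈ Finset.Ico (u i) (v i))).card ≤ 1 := by
    apply Finset.card_le_one.mpr
    intro i hi j hj
    simp only [Finset.mem_filter, Finset.mem_range, Finset.mem_Ico] at hi hj
    by_contra hne
    rcases Nat.lt_or_ge i j with h | h
    · have := chain_le u v m h1 h2 i j h hj.1
      omega
    · have hji : j < i := by omega
      have := chain_le u v m h1 h2 j i hji hi.1
      omega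
  exact_mod_cast hcard

theorem sq_var (k : ℕ) (p q : ℕ → ℕ) (θ : ℕ → ℝ)
    (hpq : ∀ i < k, p i < q i) (hqp : ∀ i, i + 1 < k → q i < p (i + 1))
    (hθ : ∀ i, |θ i| = 1) (m : ℕ) (u v : ℕ → ℕ)
    (huv : ∀ i < m, u i < v i) (hvu : ∀ i, i + 1 < m → v i ≤ u (i + 1)) :
    ∑ i ∈ Finset.range m, (∑ s ∈ Finset.Ico (u i) (v i),
      ((∑ j ∈ Finset.range k, θ j • (Finsupp.single (p j) (1:ℝ) - Finsupp.single (q j) 1)) : ℕ →₀ ℝ) s) ^ 2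
    ≤ 4 * k := by
  set y : ℕ →₀ ℝ := ∑ j ∈ Finset.range k, θ j • (Finsupp.single (p j) (1:ℝ) - Finsupp.single (q j) 1) with hy
  set S : ℕ → ℝ := fun i => ∑ s ∈ Finset.Ico (u i) (v i), y s with hS
  set D : ℕ → ℝ := fun i => ∑ j ∈ Finset.range k,
      ((if p j ∈ Finset.Ico (u i) (v i) then (1:ℝ) else 0) + (if q j ∈ Finset.Ico (u i) (v i) then 1 else 0)) with hD
  have hS2 : ∀ i < m, |S i| ≤ 2 := by
    intro i hi
    have hrw : S i = (∑ s ∈ Finset.range (v i), y s) - (∑ s ∈ Finset.range (u i), y s) := by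
      rw [hS]
      exact Finset.sum_Ico_eq_sub _ (le_of_lt (huv i hi))
    rw [hrw]
    have b1 := prefix_bound k p q θ hpq hqp hθ (v i)
    have b2 := prefix_bound k p q θ hpq hqp hθ (u i)
    rw [← interval_apply] at b1 b2
    calc |_ - _| ≤ |∑ s ∈ Finset.range (v i), y s| + |∑ s ∈ Finset.range (u i), y s| := abs_sub _ _
      _ ≤ 1 + 1 := add_le_add b1 b2
      _ = 2 := by norm_num
  have hSD : ∀ i, |S i| ≤ D i := by
    intro i
    rw [hS, hD]
    simp only
    rw [interval_apply]
    calc |∑ j ∈ Finset.range k, θ j * ((if p j ∈ Finset.Ico (u i) (v i) then (1:ℝ) else 0)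
          - (if q j ∈ Finset.Ico (u i) (v i) then 1 else 0))|
        ≤ ∑ j ∈ Finset.range k, |θ j * ((if p j ∈ Finset.Ico (u i) (v i) then (1:ℝ) else 0)
          - (if q j ∈ Finset.Ico (u i) (v i) then 1 else 0))| := Finset.abs_sum_le_sum_abs _ _
      _ ≤ ∑ j ∈ Finset.range k, ((if p j ∈ Finset.Ico (u i) (v i) then (1:ℝ) else 0)
          + (if q j ∈ Finset.Ico (u i) (v i) then 1 else 0)) := by
          apply Finset.sum_le_sum
          intro j _
          rw [abs_mul, hθ j, one_mul]
          refine le_trans (abs_sub _ _) (add_le_add ?_ ?_) <;> split_ifs <;> norm_num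
  have hDnn : ∀ i, 0 ≤ D i := fun i => le_trans (abs_nonneg _) (hSD i)
  have hsum : ∑ i ∈ Finset.range m, D i ≤ 2 * k := by
    rw [hD]
    simp only
    rw [Finset.sum_comm]
    calc ∑ j ∈ Finset.range k, ∑ i ∈ Finset.range m,
          ((if p j ∈ Finset.Ico (u i) (v i) then (1:ℝ) else 0) + (if q j ∈ Finset.Ico (u i) (v i) then 1 else 0))
        ≤ ∑ j ∈ Finset.range k, (2:ℝ) := by
          apply Finset.sum_le_sum
          intro j _
          rw [Finset.sum_add_distrib]
          have := ind_sum_le_one u v m huv hvu (p j)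
          have := ind_sum_le_one u v m huv hvu (q j)
          linarith
      _ = 2 * k := by simp [mul_comm]
  calc ∑ i ∈ Finset.range m, S i ^ 2 ≤ ∑ i ∈ Finset.range m, 2 * D i := by
        apply Finset.sum_le_sum
        intro i hi
        have h1 := hS2 i (Finset.mem_range.mp hi)
        have h2 := hSD i
        have : S i ^ 2 = |S i| * |S i| := by rw [← abs_mul, abs_mul_self, sq]
        rw [this]
        calc |S i| * |S i| ≤ 2 * |S i| := by nlinarith [abs_nonneg (S i)]
          _ ≤ 2 * D i := by linarith
    _ = 2 * ∑ i ∈ Finset.range m, D i := by rw [Finset.mul_sum]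
    _ ≤ 2 * (2 * k) := by linarith
    _ = 4 * k := by ring


/-- Lemma 3.1 of Odell–Tylli.  Represent elements of James' space `J` by their (finitely
supported) coordinates with respect to the summing basis `(f_n)`, with the norm of `y`
given as the supremum of `(∑_i S_i*(y)²)^{1/2}` over increasing families of intervals,
`S*(y) = ∑_{s ∈ S} y(s)`.  Let `φ` be a linear functional in the unit ball of `J*`
(that is, `|φ(y)| ≤ c` whenever `c ≥ 0` bounds all square variations of `y`), and let
`a_j = φ(f_j)` be the coefficients of its `w*`-representation `φ = w*-∑_j a_j f_j*`.
There is a uniform constant `C > 0` such that: if `ε > 0` and there are indices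
`p_1 < q_1 < p_2 < q_2 < … < p_k < q_k` with `|a_{p_i} - a_{q_i}| > ε` for all `i`,
then `k ≤ C / ε²`.  In particular `lim_j a_j` exists. -/
theorem stmt_13 :
    ∃ C : ℝ, 0 < C ∧
      ∀ φ : (ℕ →₀ ℝ) →ₗ[ℝ] ℝ,
        (∀ (y : ℕ →₀ ℝ) (c : ℝ), 0 ≤ c →
          (∀ (m : ℕ) (u v : ℕ → ℕ), (∀ i < m, u i < v i) →
            (∀ i, i + 1 < m → v i ≤ u (i + 1)) →
            ∑ i ∈ Finset.range m, (∑ s ∈ Finset.Ico (u i) (v i), y s) ^ 2 ≤ c ^ 2) →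
          |φ y| ≤ c) →
        ((∀ (ε : ℝ) (k : ℕ) (p q : ℕ → ℕ), 0 < ε →
            (∀ i < k, p i < q i) → (∀ i, i + 1 < k → q i < p (i + 1)) →
            (∀ i < k, ε < |φ (Finsupp.single (p i) 1) - φ (Finsupp.single (q i) 1)|) →
            (k : ℝ) ≤ C / ε ^ 2) ∧
          ∃ L : ℝ, Tendsto (fun j => φ (Finsupp.single j 1)) atTop (nhds L)) := by
  refine ⟨4, by norm_num, ?_⟩
  intro φ hφ
  set a : ℕ → ℝ := fun j => φ (Finsupp.single j 1) with ha
  have key : ∀ (ε : ℝ) (k : ℕ) (p q : ℕ → ℕ), 0 < ε →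
      (∀ i < k, p i < q i) → (∀ i, i + 1 < k → q i < p (i + 1)) →
      (∀ i < k, ε < |a (p i) - a (q i)|) → (k : ℝ) ≤ 4 / ε ^ 2 := by
    intro ε k p q hε hpq hqp hsep
    rcases Nat.eq_zero_or_pos k with hk0 | hk0
    · subst hk0; simp; positivity
    set θ : ℕ → ℝ := fun j => if 0 ≤ a (p j) - a (q j) then (1:ℝ) else -1 with hθdef
    have hθ : ∀ i, |θ i| = 1 := by
      intro i; rw [hθdef]; simp only; split_ifs <;> norm_num
    set y : ℕ →₀ ℝ := ∑ j ∈ Finset.range k, θ j • (Finsupp.single (p j) (1:ℝ) - Finsupp.single (q j) 1) with hy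
    have hφy : φ y = ∑ j ∈ Finset.range k, θ j * (a (p j) - a (q j)) := by
      rw [hy, map_sum]
      apply Finset.sum_congr rfl
      intro j _
      rw [map_smul, map_sub, smul_eq_mul, ha]
    have heach : ∀ j, θ j * (a (p j) - a (q j)) = |a (p j) - a (q j)| := by
      intro j
      rw [hθdef]
      simp only
      split_ifs with h
      · rw [one_mul, abs_of_nonneg h]
      · rw [abs_of_neg (not_le.mp h)]; ring
    have hlb : (k : ℝ) * ε < φ y := by
      rw [hφy]
      have : ∑ j ∈ Finset.range k, θ j * (a (p j) - a (q j))
          = ∑ j ∈ Finset.range k, |a (p j) - a (q j)| :=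
        Finset.sum_congr rfl (fun j _ => heach j)
      rw [this]
      have hne : (Finset.range k).Nonempty := by
        rw [Finset.nonempty_range_iff]; omega
      calc (k : ℝ) * ε = ∑ _j ∈ Finset.range k, ε := by
            rw [Finset.sum_const, Finset.card_range, nsmul_eq_mul]
        _ < ∑ j ∈ Finset.range k, |a (p j) - a (q j)| :=
            Finset.sum_lt_sum_of_nonempty hne (fun j hj => hsep j (Finset.mem_range.mp hj))
    have hub : |φ y| ≤ 2 * Real.sqrt k := by
      apply hφ y (2 * Real.sqrt k) (by positivity)
      intro m u v huv hvu
      have := sq_var k p q θ hpq hqp hθ m u v huv hvu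
      have hsq : (2 * Real.sqrt k) ^ 2 = 4 * k := by
        rw [mul_pow, Real.sq_sqrt (Nat.cast_nonneg k)]; ring
      rw [hsq]
      exact this
    have hs : Real.sqrt k ^ 2 = (k : ℝ) := Real.sq_sqrt (Nat.cast_nonneg k)
    have hkpos : (0:ℝ) < k := by exact_mod_cast hk0
    have hlt : (k : ℝ) * ε < 2 * Real.sqrt k :=
      lt_of_lt_of_le hlb (le_trans (le_abs_self _) hub)
    have h2 : ((k:ℝ) * ε) * ((k:ℝ) * ε) < (2 * Real.sqrt k) * (2 * Real.sqrt k) :=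
      mul_lt_mul'' hlt hlt (by positivity) (by positivity)
    rw [le_div_iff₀ (by positivity)]
    nlinarith [h2, hs, hkpos, hε]
  refine ⟨key, ?_⟩
  have hC : CauchySeq a := by
    by_contra hnc
    rw [Metric.cauchySeq_iff'] at hnc
    push_neg at hnc
    obtain ⟨ε, hε, hN⟩ := hnc
    have H : ∀ N : ℕ, ∃ pq : ℕ × ℕ, N ≤ pq.1 ∧ pq.1 < pq.2 ∧ ε / 2 < |a pq.1 - a pq.2| := by
      intro N
      obtain ⟨n, hn, hd⟩ := hN N
      rw [Real.dist_eq] at hd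
      have hne : N < n := by
        rcases Nat.lt_or_ge N n with h | h
        · exact h
        · exfalso
          have : n = N := by omega
          subst this
          simp at hd
          linarith
      exact ⟨(N, n), le_refl _, hne, by rw [abs_sub_comm]; linarith⟩
    set P : ℕ → ℕ × ℕ := fun n => Nat.rec (H 0).choose (fun _ prev => (H (prev.2 + 1)).choose) n with hPdef
    have hP0 : P 0 = (H 0).choose := rfl
    have hPs : ∀ n, P (n + 1) = (H ((P n).2 + 1)).choose := fun n => rfl
    have hprop : ∀ n, (P n).1 < (P n).2 ∧ ε / 2 < |a (P n).1 - a (P n).2| := by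
      intro n
      cases n with
      | zero => exact ⟨(H 0).choose_spec.2.1, (H 0).choose_spec.2.2⟩
      | succ n =>
        rw [hPs n]
        exact ⟨(H ((P n).2 + 1)).choose_spec.2.1, (H ((P n).2 + 1)).choose_spec.2.2⟩
    have hstep : ∀ n, (P n).2 < (P (n + 1)).1 := by
      intro n
      have := (H ((P n).2 + 1)).choose_spec.1
      rw [hPs n]
      omega
    obtain ⟨k, hk⟩ := exists_nat_gt (4 / (ε / 2) ^ 2)
    have := key (ε / 2) k (fun n => (P n).1) (fun n => (P n).2) (by linarith)
      (fun i _ => (hprop i).1) (fun i _ => hstep i) (fun i _ => (hprop i).2)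
    linarith
  obtain ⟨L, hL⟩ := cauchySeq_tendsto_of_complete hC
  exact ⟨L, hL⟩
end
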